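/- arXiv:1402.1970 — 7 statements merged into one kernel-verified Lean document; each statement's English description precedes it below -/
import Mathlib

section
/- Let p be an odd prime and let p' be the smallest prime greater than p (so that p'# = p'·p#). Then for every even integer g with 2 ≤ g < 2p' and every integer j ≥ 1, the counts of driving terms satisfy the recursion n_{g,j}(p'#) = (p' − j − 1)·n_{g,j}(p#) + j·n_{g,j+1}(p#). -/
open Finset

/-- `nGaps N g j` is the number of driving terms of length `j` for the gap `g`
in the cycle of gaps of `N`: totatives `a` of `N` with `gcd (a + g) N = 1` and
exactly `j - 1` integers `b` with `a < b < a + g` coprime to `N`. -/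
def nGaps (N g j : ℕ) : ℕ :=
  ((Finset.Icc 1 N).filter (fun a =>
    Nat.gcd a N = 1 ∧ Nat.gcd (a + g) N = 1 ∧
      ((Finset.Ioo a (a + g)).filter (fun b => Nat.gcd b N = 1)).card = j - 1)).card


-- the unique t < q with q ∣ b + t*N
def tOf (q N b : ℕ) : ℕ := ((-(b : ZMod q)) * (N : ZMod q)⁻¹).val

lemma tOf_lt {q : ℕ} (hq : q.Prime) (N b : ℕ) : tOf q N b < q := by
  haveI : Fact q.Prime := ⟨hq⟩
  exact ZMod.val_lt _

lemma tOf_spec {q N : ℕ} (hq : q.Prime) (hco : ¬ q ∣ N) (b : ℕ) :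
    q ∣ b + tOf q N b * N := by
  haveI : Fact q.Prime := ⟨hq⟩
  have hN : (N : ZMod q) ≠ 0 := by
    simpa [ZMod.natCast_eq_zero_iff] using hco
  rw [← ZMod.natCast_eq_zero_iff]
  push_cast
  rw [tOf, ZMod.natCast_rightInverse _]
  field_simp
  ring

lemma eq_tOf {q N b t : ℕ} (hq : q.Prime) (hco : ¬ q ∣ N) (ht : t < q)
    (hdvd : q ∣ b + t * N) : t = tOf q N b := by
  haveI : Fact q.Prime := ⟨hq⟩
  have hN : (N : ZMod q) ≠ 0 := by
    simpa [ZMod.natCast_eq_zero_iff] using hco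
  have h0 : ((b + t * N : ℕ) : ZMod q) = 0 := by
    rwa [ZMod.natCast_eq_zero_iff]
  push_cast at h0
  have : (t : ZMod q) = (-(b : ZMod q)) * (N : ZMod q)⁻¹ := by
    field_simp
    linear_combination h0
  rw [← ZMod.val_cast_of_lt ht, this]; rfl

lemma core_arith (x y q k : ℕ) (hx : x%2=1) (hy : y%2=1) (hq : q%2=1)
    (hle : x ≤ y) (hlt : y - x < 2*q) (hk : y - x = q*k) : x = y := by
  rcases k with _ | _ | k
  · omega
  · omega
  · have h2 : q * 2 ≤ y - x := hk ▸ Nat.mul_le_mul_left _ (by omega)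
    omega

section
variable {N q g : ℕ}

lemma coprime_odd (h2N : 2 ∣ N) {c : ℕ} (hc : Nat.gcd c N = 1) : c % 2 = 1 := by
  rcases Nat.even_or_odd c with hce | hodd
  · have h2c : 2 ∣ Nat.gcd c N := Nat.dvd_gcd hce.two_dvd h2N
    rw [hc] at h2c; omega
  · exact Nat.odd_iff.mp hodd

lemma tOf_injOn (h2N : 2 ∣ N) (hq : q.Prime) (hqodd : Odd q) (hco : ¬ q ∣ N)
    (hglt : g < 2 * q) (a : ℕ) :
    Set.InjOn (tOf q N) ((Finset.Icc a (a+g)).filter (fun b => Nat.gcd b N = 1) : Finset ℕ) := by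
  have hqodd' : q % 2 = 1 := Nat.odd_iff.mp hqodd
  intro b hb b' hb' he
  simp only [Finset.coe_filter, Set.mem_setOf_eq, Finset.mem_Icc] at hb hb'
  have hob := coprime_odd h2N hb.2
  have hob' := coprime_odd h2N hb'.2
  have hd1 : q ∣ b + tOf q N b * N := tOf_spec hq hco b
  have hd2 : q ∣ b' + tOf q N b * N := he ▸ tOf_spec hq hco b'
  rcases le_total b b' with hle | hle
  · have hdvd := Nat.dvd_sub hd2 hd1
    have heq : (b' + tOf q N b * N) - (b + tOf q N b * N) = b' - b := by omega
    rw [heq] at hdvd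
    obtain ⟨k, hk⟩ := hdvd
    exact core_arith b b' q k hob hob' hqodd' hle (by omega) hk
  · have hdvd := Nat.dvd_sub hd1 hd2
    have heq : (b + tOf q N b * N) - (b' + tOf q N b * N) = b - b' := by omega
    rw [heq] at hdvd
    obtain ⟨k, hk⟩ := hdvd
    exact (core_arith b' b q k hob' hob hqodd' hle (by omega) hk).symm

lemma hit_unique (h2N : 2 ∣ N) (hq : q.Prime) (hqodd : Odd q) (hco : ¬ q ∣ N)
    (hglt : g < 2 * q) {a b b' t : ℕ}
    (hb : b ∈ (Finset.Icc a (a+g)).filter (fun b => Nat.gcd b N = 1))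
    (hb' : b' ∈ (Finset.Icc a (a+g)).filter (fun b => Nat.gcd b N = 1))
    (ht : t < q) (h1 : q ∣ b + t * N) (h2 : q ∣ b' + t * N) : b = b' := by
  have e1 := eq_tOf hq hco ht h1
  have e2 := eq_tOf hq hco ht h2
  exact tOf_injOn h2N hq hqodd hco hglt a (Finset.mem_coe.mpr hb) (Finset.mem_coe.mpr hb')
    (e1 ▸ e2 ▸ rfl)

end

section
variable {N q g j : ℕ}

lemma gcd_mul_iff (hq : q.Prime) (x : ℕ) :
    Nat.gcd x (q * N) = 1 ↔ (Nat.gcd x N = 1 ∧ ¬ q ∣ x) := by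
  constructor
  · intro h
    have h' : Nat.Coprime x (q * N) := h
    rw [Nat.coprime_mul_iff_right] at h'
    exact ⟨h'.2, fun hd => (hq.coprime_iff_not_dvd.mp h'.1.symm) hd⟩
  · rintro ⟨h1, h2⟩
    have h' : Nat.Coprime x (q * N) := Nat.coprime_mul_iff_right.mpr
      ⟨(hq.coprime_iff_not_dvd.mpr h2).symm, h1⟩
    exact h'

end
lemma icc_decomp {N : ℕ} (hN : 0 < N) (q : ℕ) (P : ℕ → Prop) [DecidablePred P] :
    ((Finset.Icc 1 (q * N)).filter P).card
      = ∑ t ∈ Finset.range q, ((Finset.Icc 1 N).filter (fun a => P (a + t * N))).card := by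
  have hup : ∀ a t : ℕ, 1 ≤ a → a ≤ N → t < q → a + t * N ≤ q * N := by
    intro a t h1 h2 ht
    calc a + t * N ≤ N + t * N := by omega
    _ = (t + 1) * N := by ring
    _ ≤ q * N := Nat.mul_le_mul_right _ (by omega)
  have key : Finset.Icc 1 (q * N) = (Finset.range q).biUnion
      (fun t => (Finset.Icc 1 N).image (fun a => a + t * N)) := by
    ext x
    simp only [Finset.mem_Icc, Finset.mem_biUnion, Finset.mem_range, Finset.mem_image]
    constructor
    · rintro ⟨h1, h2⟩
      have hdm := Nat.div_add_mod (x - 1) N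
      have hm : (x - 1) % N < N := Nat.mod_lt _ hN
      have hmc : (x - 1) / N * N = N * ((x - 1) / N) := Nat.mul_comm _ _
      refine ⟨(x - 1) / N, ?_, x - (x - 1) / N * N, ?_, ?_⟩
      · rw [Nat.div_lt_iff_lt_mul hN]; omega
      · omega
      · omega
    · rintro ⟨t, ht, a, ⟨ha1, ha2⟩, rfl⟩
      exact ⟨by omega, hup a t ha1 ha2 ht⟩
  rw [key, Finset.filter_biUnion, Finset.card_biUnion]
  · refine Finset.sum_congr rfl fun t _ => ?_
    rw [Finset.filter_image]
    exact Finset.card_image_of_injective _ (fun a b h => by simpa using h)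
  · intro s hs u hu hsu
    simp only [Finset.mem_coe, Finset.mem_range] at hs hu
    apply Finset.disjoint_filter_filter
    rw [Finset.disjoint_left]
    rintro x hx hx'
    simp only [Finset.mem_image, Finset.mem_Icc] at hx hx'
    obtain ⟨a, ⟨ha1, ha2⟩, rfl⟩ := hx
    obtain ⟨b, ⟨hb1, hb2⟩, he⟩ := hx'
    rcases Nat.lt_or_ge s u with h | h
    · have h1 : a + s * N ≤ (s + 1) * N := by
        have : a + s*N ≤ N + s*N := by omega
        calc a + s * N ≤ N + s * N := this
        _ = (s+1) * N := by ring
      have h2 : (s+1) * N ≤ u * N := Nat.mul_le_mul_right _ (by omega)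
      omega
    · rcases Nat.lt_or_ge u s with h' | h'
      · have h1 : b + u * N ≤ (u + 1) * N := by
          calc b + u * N ≤ N + u * N := by omega
          _ = (u+1) * N := by ring
        have h2 : (u+1) * N ≤ s * N := Nat.mul_le_mul_right _ (by omega)
        omega
      · omega

open Classical in
lemma key_count {N q g j : ℕ} (h2N : 2 ∣ N) (hq : q.Prime) (hqodd : Odd q) (hco : ¬ q ∣ N)
    (hg2 : 2 ≤ g) (hglt : g < 2 * q) (hj : 1 ≤ j) (a : ℕ) :
    ((Finset.range q).filter (fun t =>
      Nat.gcd (a + t * N) (q * N) = 1 ∧ Nat.gcd (a + t * N + g) (q * N) = 1 ∧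
        ((Finset.Ioo (a + t * N) (a + t * N + g)).filter
          (fun b => Nat.gcd b (q * N) = 1)).card = j - 1)).card
    = (if Nat.gcd a N = 1 ∧ Nat.gcd (a + g) N = 1 ∧
          ((Finset.Ioo a (a + g)).filter (fun b => Nat.gcd b N = 1)).card = j - 1
        then q - j - 1 else 0)
      + (if Nat.gcd a N = 1 ∧ Nat.gcd (a + g) N = 1 ∧
          ((Finset.Ioo a (a + g)).filter (fun b => Nat.gcd b N = 1)).card = j
        then j else 0) := by
  set I : Finset ℕ := (Finset.Ioo a (a + g)).filter (fun b => Nat.gcd b N = 1) with hI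
  set K : Finset ℕ := (Finset.Icc a (a + g)).filter (fun b => Nat.gcd b N = 1) with hK
  set m : ℕ := I.card with hm
  have hqN : 0 < N := by
    rcases Nat.eq_zero_or_pos N with h | h
    · exact absurd (h ▸ dvd_zero q) hco
    · exact h
  -- shift of gcd
  have gshift : ∀ x t : ℕ, Nat.gcd (x + t * N) N = Nat.gcd x N := fun x t =>
    Nat.gcd_add_mul_right_left N x t
  -- interior count identity
  have interior : ∀ t : ℕ,
      ((Finset.Ioo (a + t * N) (a + t * N + g)).filter
        (fun b => Nat.gcd b (q * N) = 1)).card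
      = (I.filter (fun b => ¬ q ∣ (b + t * N))).card := by
    intro t
    have himg : Finset.Ioo (a + t * N) (a + t * N + g)
        = (Finset.Ioo a (a + g)).image (fun x => x + t * N) := by
      rw [Finset.image_add_right_Ioo]
      congr 1
      omega
    rw [himg, Finset.filter_image,
      Finset.card_image_of_injective _ (add_left_injective _)]
    rw [hI, Finset.filter_filter]
    apply Finset.card_nbij id (fun x hx => ?_) (fun x hx y hy h => h) (fun x hx => ⟨x, ?_, rfl⟩)
    · simp only [Finset.mem_coe, Finset.mem_filter] at hx ⊢
      have := (gcd_mul_iff (N := N) hq (x + t * N)).mp hx.2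
      exact ⟨hx.1, (gshift x t) ▸ this.1, this.2⟩
    · simp only [Finset.mem_coe, Finset.mem_filter] at hx ⊢
      exact ⟨hx.1, (gcd_mul_iff hq _).mpr ⟨(gshift x t).symm ▸ hx.2.1, hx.2.2⟩⟩
  
  by_cases hgood : Nat.gcd a N = 1 ∧ Nat.gcd (a + g) N = 1
  case neg =>
    rw [if_neg (fun h => hgood ⟨h.1, h.2.1⟩), if_neg (fun h => hgood ⟨h.1, h.2.1⟩)]
    rw [Finset.card_eq_zero.mpr, Nat.add_zero]
    rw [Finset.filter_eq_empty_iff]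
    intro t _ hP
    apply hgood
    have h1 := ((gcd_mul_iff hq _).mp hP.1).1
    rw [gshift] at h1
    have h2 := ((gcd_mul_iff hq _).mp hP.2.1).1
    have e : a + t * N + g = (a + g) + t * N := by omega
    rw [e, gshift] at h2
    exact ⟨h1, h2⟩
  case pos =>
  -- membership facts
  have haK : a ∈ K := by
    rw [hK, Finset.mem_filter, Finset.mem_Icc]
    exact ⟨⟨le_refl a, Nat.le_add_right a g⟩, hgood.1⟩
  have hgE : a + g ∈ K := by
    rw [hK, Finset.mem_filter, Finset.mem_Icc]
    exact ⟨⟨Nat.le_add_right a g, le_refl _⟩, hgood.2⟩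
  have hIK : I ⊆ K := by
    rw [hI, hK]
    exact Finset.filter_subset_filter _ (Finset.Ioo_subset_Icc_self)
  have hKeq : K = insert a (insert (a + g) I) := by
    ext b
    simp only [hK, hI, Finset.mem_filter, Finset.mem_Icc, Finset.mem_Ioo,
      Finset.mem_insert]
    constructor
    · rintro ⟨⟨h1, h2⟩, hc⟩
      rcases eq_or_lt_of_le h1 with rfl | h1'
      · exact Or.inl rfl
      · rcases eq_or_lt_of_le h2 with h2' | h2'
        · exact Or.inr (Or.inl h2')
        · exact Or.inr (Or.inr ⟨⟨h1', h2'⟩, hc⟩)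
    · rintro (rfl | h | ⟨⟨h1, h2⟩, hc⟩)
      · exact ⟨⟨le_refl _, Nat.le_add_right _ _⟩, hgood.1⟩
      · subst h
        exact ⟨⟨Nat.le_add_right _ _, le_refl _⟩, hgood.2⟩
      · exact ⟨⟨le_of_lt h1, le_of_lt h2⟩, hc⟩
  have haI : a ∉ I := by
    rw [hI]
    simp only [Finset.mem_filter, Finset.mem_Ioo]
    rintro ⟨⟨h, _⟩, _⟩
    exact lt_irrefl a h
  have hgI : a + g ∉ I := by
    rw [hI]
    simp only [Finset.mem_filter, Finset.mem_Ioo]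
    rintro ⟨⟨_, h⟩, _⟩
    exact lt_irrefl _ h
  have haI' : a ∉ insert (a + g) I := by
    simp only [Finset.mem_insert]
    rintro (h | h)
    · omega
    · exact haI h
  have hKcard : K.card = m + 2 := by
    rw [hKeq, Finset.card_insert_of_notMem haI', Finset.card_insert_of_notMem hgI]
  
  have hinj := tOf_injOn h2N hq hqodd hco hglt a
  set T : Finset ℕ := K.image (tOf q N) with hT
  have hTsub : T ⊆ Finset.range q := by
    intro t ht
    rw [hT, Finset.mem_image] at ht
    obtain ⟨b, _, rfl⟩ := ht
    exact Finset.mem_range.mpr (tOf_lt hq N b)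
  have hTcard : T.card = m + 2 := by
    rw [hT, Finset.card_image_of_injOn hinj, hKcard]
  have hbound : m + 2 ≤ q := by
    calc m + 2 = T.card := hTcard.symm
    _ ≤ (Finset.range q).card := Finset.card_le_card hTsub
    _ = q := Finset.card_range q
  -- the three evaluation lemmas
  set P : ℕ → Prop := fun t =>
    Nat.gcd (a + t * N) (q * N) = 1 ∧ Nat.gcd (a + t * N + g) (q * N) = 1 ∧
      ((Finset.Ioo (a + t * N) (a + t * N + g)).filter
        (fun b => Nat.gcd b (q * N) = 1)).card = j - 1 with hP
  have evalA : ∀ t, t < q → (¬ ∃ b ∈ K, q ∣ b + t * N) → (P t ↔ m = j - 1) := by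
    intro t ht hno
    push_neg at hno
    have e1 : Nat.gcd (a + t * N) (q * N) = 1 :=
      (gcd_mul_iff hq _).mpr ⟨(gshift a t).symm ▸ hgood.1, hno a haK⟩
    have e2 : Nat.gcd (a + t * N + g) (q * N) = 1 := by
      have e : a + t * N + g = (a + g) + t * N := by omega
      rw [e]
      exact (gcd_mul_iff hq _).mpr ⟨(gshift (a + g) t).symm ▸ hgood.2, hno (a + g) hgE⟩
    have e3 : (I.filter (fun b => ¬ q ∣ (b + t * N))).card = m := by
      rw [Finset.filter_true_of_mem, hm]
      intro b hb
      exact hno b (hIK hb)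
    rw [hP]
    simp only [e1, e2, interior t, e3, true_and]
  have evalB : ∀ t, t < q → ∀ b₀ ∈ K, q ∣ b₀ + t * N → (b₀ = a ∨ b₀ = a + g) → ¬ P t := by
    rintro t ht b₀ hb₀ hdvd (rfl | rfl)
    · rintro ⟨h1, -, -⟩
      exact ((gcd_mul_iff hq _).mp h1).2 hdvd
    · rintro ⟨-, h2, -⟩
      have e : a + t * N + g = (a + g) + t * N := by omega
      rw [e] at h2
      exact ((gcd_mul_iff hq _).mp h2).2 hdvd
  have evalC : ∀ t, t < q → ∀ b₀ ∈ I, q ∣ b₀ + t * N → (P t ↔ m - 1 = j - 1) := by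
    intro t ht b₀ hb₀ hdvd
    have hb₀K : b₀ ∈ K := hIK hb₀
    have e1 : Nat.gcd (a + t * N) (q * N) = 1 := by
      refine (gcd_mul_iff hq _).mpr ⟨(gshift a t).symm ▸ hgood.1, fun hd => ?_⟩
      have := hit_unique h2N hq hqodd hco hglt haK hb₀K ht hd hdvd
      exact haI (this ▸ hb₀)
    have e2 : Nat.gcd (a + t * N + g) (q * N) = 1 := by
      have e : a + t * N + g = (a + g) + t * N := by omega
      rw [e]
      refine (gcd_mul_iff hq _).mpr ⟨(gshift (a + g) t).symm ▸ hgood.2, fun hd => ?_⟩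
      have := hit_unique h2N hq hqodd hco hglt hgE hb₀K ht hd hdvd
      exact hgI (this ▸ hb₀)
    have e3 : I.filter (fun b => ¬ q ∣ (b + t * N)) = I.erase b₀ := by
      ext b
      simp only [Finset.mem_filter, Finset.mem_erase]
      constructor
      · rintro ⟨hb, hnd⟩
        exact ⟨fun h => hnd (h ▸ hdvd), hb⟩
      · rintro ⟨hne, hb⟩
        refine ⟨hb, fun hd => hne ?_⟩
        exact hit_unique h2N hq hqodd hco hglt (hIK hb) hb₀K ht hd hdvd
    have e3' : (I.filter (fun b => ¬ q ∣ (b + t * N))).card = m - 1 := by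
      rw [e3, Finset.card_erase_of_mem hb₀, hm]
    rw [hP]
    simp only [e1, e2, interior t, e3', true_and]
  
  have hgetI : ∀ b₀ ∈ K, b₀ ≠ a → b₀ ≠ a + g → b₀ ∈ I := by
    intro b₀ hb₀K h1 h2
    rw [hKeq] at hb₀K
    simp only [Finset.mem_insert] at hb₀K
    tauto
  by_cases hm1 : m = j - 1
  · -- case m = j - 1 : count is q - j - 1
    have hS : (Finset.range q).filter P = Finset.range q \ T := by
      ext t
      simp only [Finset.mem_filter, Finset.mem_sdiff, Finset.mem_range]
      constructor
      · rintro ⟨ht, hPt⟩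
        refine ⟨ht, fun htT => ?_⟩
        rw [hT, Finset.mem_image] at htT
        obtain ⟨b₀, hb₀K, hb₀t⟩ := htT
        have hdvd : q ∣ b₀ + t * N := hb₀t ▸ tOf_spec hq hco b₀
        by_cases hbend : b₀ = a ∨ b₀ = a + g
        · exact evalB t ht b₀ hb₀K hdvd hbend hPt
        · push_neg at hbend
          have hb₀I : b₀ ∈ I := hgetI b₀ hb₀K hbend.1 hbend.2
          have hmpos : 1 ≤ m := by
            rw [hm]
            exact Finset.card_pos.mpr ⟨b₀, hb₀I⟩
          have := (evalC t ht b₀ hb₀I hdvd).mp hPt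
          omega
      · rintro ⟨ht, htT⟩
        refine ⟨ht, ?_⟩
        have hno : ¬ ∃ b ∈ K, q ∣ b + t * N := by
          rintro ⟨b, hbK, hdvd⟩
          exact htT (hT ▸ Finset.mem_image.mpr ⟨b, hbK, (eq_tOf hq hco ht hdvd).symm⟩)
        exact (evalA t ht hno).mpr hm1
    have hcard : ((Finset.range q).filter P).card = q - j - 1 := by
      rw [hS, Finset.card_sdiff_of_subset hTsub, Finset.card_range, hTcard]
      omega
    rw [hcard, if_pos ⟨hgood.1, hgood.2, hm1⟩, if_neg (fun h => by
      have := h.2.2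
      omega)]
    omega
  · by_cases hm2 : m = j
    · -- case m = j : count is j
      have hS : (Finset.range q).filter P = I.image (tOf q N) := by
        ext t
        simp only [Finset.mem_filter, Finset.mem_range, Finset.mem_image]
        constructor
        · rintro ⟨ht, hPt⟩
          by_cases hhit : ∃ b ∈ K, q ∣ b + t * N
          · obtain ⟨b₀, hb₀K, hdvd⟩ := hhit
            by_cases hbend : b₀ = a ∨ b₀ = a + g
            · exact absurd hPt (evalB t ht b₀ hb₀K hdvd hbend)
            · push_neg at hbend
              exact ⟨b₀, hgetI b₀ hb₀K hbend.1 hbend.2, (eq_tOf hq hco ht hdvd).symm⟩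
          · exact absurd ((evalA t ht hhit).mp hPt) (by omega)
        · rintro ⟨b₀, hb₀I, ht'⟩
          subst ht'
          have ht : tOf q N b₀ < q := tOf_lt hq N b₀
          have hdvd := tOf_spec hq hco b₀
          have hmpos : 1 ≤ m := by
            rw [hm]
            exact Finset.card_pos.mpr ⟨b₀, hb₀I⟩
          exact ⟨ht, (evalC _ ht b₀ hb₀I hdvd).mpr (by omega)⟩
      have hcard : ((Finset.range q).filter P).card = j := by
        rw [hS, Finset.card_image_of_injOn (hinj.mono (Finset.coe_subset.mpr hIK)), ← hm, hm2]
      rw [hcard, if_neg (fun h => by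
        have := h.2.2
        omega), if_pos ⟨hgood.1, hgood.2, hm2⟩]
      omega
    · -- neither : count is 0
      have hS : (Finset.range q).filter P = ∅ := by
        rw [Finset.filter_eq_empty_iff]
        intro t ht
        rw [Finset.mem_range] at ht
        by_cases hhit : ∃ b ∈ K, q ∣ b + t * N
        · obtain ⟨b₀, hb₀K, hdvd⟩ := hhit
          by_cases hbend : b₀ = a ∨ b₀ = a + g
          · exact evalB t ht b₀ hb₀K hdvd hbend
          · push_neg at hbend
            have hb₀I : b₀ ∈ I := hgetI b₀ hb₀K hbend.1 hbend.2
            have hmpos : 1 ≤ m := by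
              rw [hm]
              exact Finset.card_pos.mpr ⟨b₀, hb₀I⟩
            intro hPt
            have := (evalC t ht b₀ hb₀I hdvd).mp hPt
            omega
        · intro hPt
          exact hm1 ((evalA t ht hhit).mp hPt)
      rw [hS, Finset.card_empty, if_neg (fun h => by
        have := h.2.2
        omega), if_neg (fun h => by
        have := h.2.2
        omega)]

lemma count_bound {N q g : ℕ} (h2N : 2 ∣ N) (hq : q.Prime) (hqodd : Odd q) (hco : ¬ q ∣ N)
    (hg2 : 2 ≤ g) (hglt : g < 2 * q) (a : ℕ)
    (h1 : Nat.gcd a N = 1) (h2 : Nat.gcd (a + g) N = 1) :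
    ((Finset.Ioo a (a + g)).filter (fun b => Nat.gcd b N = 1)).card + 2 ≤ q := by
  set I : Finset ℕ := (Finset.Ioo a (a + g)).filter (fun b => Nat.gcd b N = 1) with hI
  set K : Finset ℕ := (Finset.Icc a (a + g)).filter (fun b => Nat.gcd b N = 1) with hK
  have hKeq : K = insert a (insert (a + g) I) := by
    ext b
    simp only [hK, hI, Finset.mem_filter, Finset.mem_Icc, Finset.mem_Ioo,
      Finset.mem_insert]
    constructor
    · rintro ⟨⟨hb1, hb2⟩, hc⟩
      rcases eq_or_lt_of_le hb1 with rfl | hb1'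
      · exact Or.inl rfl
      · rcases eq_or_lt_of_le hb2 with hb2' | hb2'
        · exact Or.inr (Or.inl hb2')
        · exact Or.inr (Or.inr ⟨⟨hb1', hb2'⟩, hc⟩)
    · rintro (rfl | hb | ⟨⟨hb1, hb2⟩, hc⟩)
      · exact ⟨⟨le_refl _, Nat.le_add_right _ _⟩, h1⟩
      · subst hb
        exact ⟨⟨Nat.le_add_right _ _, le_refl _⟩, h2⟩
      · exact ⟨⟨le_of_lt hb1, le_of_lt hb2⟩, hc⟩
  have haI : a ∉ insert (a + g) I := by
    simp only [Finset.mem_insert, hI, Finset.mem_filter, Finset.mem_Ioo]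
    rintro (h | ⟨⟨h, _⟩, _⟩)
    · omega
    · exact lt_irrefl a h
  have hgI : a + g ∉ I := by
    simp only [hI, Finset.mem_filter, Finset.mem_Ioo]
    rintro ⟨⟨_, h⟩, _⟩
    exact lt_irrefl _ h
  have hKcard : K.card = I.card + 2 := by
    rw [hKeq, Finset.card_insert_of_notMem haI, Finset.card_insert_of_notMem hgI]
  calc I.card + 2 = K.card := hKcard.symm
  _ = (K.image (tOf q N)).card :=
    (Finset.card_image_of_injOn (tOf_injOn h2N hq hqodd hco hglt a)).symm
  _ ≤ (Finset.range q).card := by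
    apply Finset.card_le_card
    intro t ht
    rw [Finset.mem_image] at ht
    obtain ⟨b, _, rfl⟩ := ht
    exact Finset.mem_range.mpr (tOf_lt hq N b)
  _ = q := Finset.card_range q

lemma nGaps_rec {N q g j : ℕ} (h2N : 2 ∣ N) (hq : q.Prime) (hqodd : Odd q) (hco : ¬ q ∣ N)
    (hg2 : 2 ≤ g) (hglt : g < 2 * q) (hj : 1 ≤ j) :
    nGaps (q * N) g j = (q - j - 1) * nGaps N g j + j * nGaps N g (j + 1) := by
  classical
  have hqN : 0 < N := by
    rcases Nat.eq_zero_or_pos N with h | h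
    · exact absurd (h ▸ dvd_zero q) hco
    · exact h
  unfold nGaps
  rw [icc_decomp hqN q _]
  have swap : ∑ t ∈ Finset.range q, ((Finset.Icc 1 N).filter (fun a =>
      Nat.gcd (a + t * N) (q * N) = 1 ∧ Nat.gcd (a + t * N + g) (q * N) = 1 ∧
        ((Finset.Ioo (a + t * N) (a + t * N + g)).filter
          (fun b => Nat.gcd b (q * N) = 1)).card = j - 1)).card
      = ∑ a ∈ Finset.Icc 1 N, ((Finset.range q).filter (fun t =>
      Nat.gcd (a + t * N) (q * N) = 1 ∧ Nat.gcd (a + t * N + g) (q * N) = 1 ∧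
        ((Finset.Ioo (a + t * N) (a + t * N + g)).filter
          (fun b => Nat.gcd b (q * N) = 1)).card = j - 1)).card := by
    simp only [Finset.card_filter]
    exact Finset.sum_comm
  rw [swap]
  have key : ∀ a ∈ Finset.Icc 1 N, ((Finset.range q).filter (fun t =>
      Nat.gcd (a + t * N) (q * N) = 1 ∧ Nat.gcd (a + t * N + g) (q * N) = 1 ∧
        ((Finset.Ioo (a + t * N) (a + t * N + g)).filter
          (fun b => Nat.gcd b (q * N) = 1)).card = j - 1)).card
      = (if Nat.gcd a N = 1 ∧ Nat.gcd (a + g) N = 1 ∧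
          ((Finset.Ioo a (a + g)).filter (fun b => Nat.gcd b N = 1)).card = j - 1
        then q - j - 1 else 0)
      + (if Nat.gcd a N = 1 ∧ Nat.gcd (a + g) N = 1 ∧
          ((Finset.Ioo a (a + g)).filter (fun b => Nat.gcd b N = 1)).card = j
        then j else 0) := fun a _ => key_count h2N hq hqodd hco hg2 hglt hj a
  rw [Finset.sum_congr rfl key, Finset.sum_add_distrib]
  rw [← Finset.sum_filter, ← Finset.sum_filter]
  rw [Finset.sum_const, Finset.sum_const, smul_eq_mul, smul_eq_mul]
  have e2 : (j + 1) - 1 = j := by omega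
  rw [e2]
  ring

lemma primorial_step {p p' : ℕ} (hp : p.Prime) (hp' : p'.Prime) (hgt : p < p')
    (hmin : ∀ r : ℕ, r.Prime → p < r → p' ≤ r) :
    primorial p' = p' * primorial p := by
  unfold primorial
  have hfil : (Finset.range (p' + 1)).filter Nat.Prime
      = insert p' ((Finset.range (p + 1)).filter Nat.Prime) := by
    ext r
    simp only [Finset.mem_filter, Finset.mem_range, Finset.mem_insert]
    constructor
    · rintro ⟨hr, hrp⟩
      by_cases h : r = p'
      · exact Or.inl h
      · refine Or.inr ⟨?_, hrp⟩
        by_cases h2 : p < r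
        · exact absurd (hmin r hrp h2) (by omega)
        · omega
    · rintro (rfl | ⟨hr, hrp⟩)
      · exact ⟨by omega, hp'⟩
      · exact ⟨by omega, hrp⟩
  have hnot : p' ∉ (Finset.range (p + 1)).filter Nat.Prime := by
    simp only [Finset.mem_filter, Finset.mem_range]
    omega
  rw [hfil, Finset.prod_insert hnot]

lemma two_dvd_primorial {p : ℕ} (hp : p.Prime) (hodd : Odd p) : 2 ∣ primorial p := by
  apply Finset.dvd_prod_of_mem
  simp only [Finset.mem_filter, Finset.mem_range]
  have h2 := hp.two_le
  have hne : p ≠ 2 := by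
    rintro rfl
    exact (by decide : ¬ Odd 2) hodd
  exact ⟨by omega, Nat.prime_two⟩

lemma not_dvd_primorial {p p' : ℕ} (hp' : p'.Prime) (hgt : p < p') :
    ¬ p' ∣ primorial p := by
  rw [← hp'.coprime_iff_not_dvd]
  apply Nat.Coprime.prod_right
  intro r hr
  simp only [Finset.mem_filter, Finset.mem_range] at hr
  exact (Nat.coprime_primes hp' hr.2).mpr (by omega)

theorem stmt_0 (p p' : ℕ) (hp : p.Prime) (hodd : Odd p)
    (hp' : p'.Prime) (hgt : p < p') (hmin : ∀ r : ℕ, r.Prime → p < r → p' ≤ r)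
    (g : ℕ) (hg2 : 2 ≤ g) (hgeven : Even g) (hglt : g < 2 * p')
    (j : ℕ) (hj : 1 ≤ j) :
    (nGaps (primorial p') g j : ℤ) =
      ((p' : ℤ) - j - 1) * nGaps (primorial p) g j
        + (j : ℤ) * nGaps (primorial p) g (j + 1) := by
  set N := primorial p with hN
  have h2N : 2 ∣ N := two_dvd_primorial hp hodd
  have hco : ¬ p' ∣ N := not_dvd_primorial hp' hgt
  have hp2 := hp.two_le
  have hqodd : Odd p' := hp'.odd_of_ne_two (by omega)
  have hrec : nGaps (p' * N) g j = (p' - j - 1) * nGaps N g j + j * nGaps N g (j + 1) :=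
    nGaps_rec h2N hp' hqodd hco hg2 hglt hj
  rw [primorial_step hp hp' hgt hmin, hrec]
  push_cast
  by_cases hz : nGaps N g j = 0
  · rw [hz]
    push_cast
    ring
  · have hjq : j + 1 ≤ p' := by
      obtain ⟨a, ha⟩ := Finset.card_ne_zero.mp hz
      simp only [Finset.mem_filter] at ha
      have hb := count_bound h2N hp' hqodd hco hg2 hglt a ha.2.1 ha.2.2.1
      have hc := ha.2.2.2
      omega
    have : ((p' - j - 1 : ℕ) : ℤ) = (p' : ℤ) - j - 1 := by omega
    rw [this]
end

section
/- Let p be an odd prime, let p' be the smallest prime greater than p, and let g be an even integer with 2 ≤ g < 2p'. Then, as k → ∞, the real-valued ratio n_{g,1}(p_k#)/n_{2,1}(p_k#) converges to T_g(p#)/n_{2,1}(p#), i.e., the asymptotic ratio of occurrences of the gap g to occurrences of the gap 2 equals the sum over all lengths j of the initial ratios n_{g,j}(p#)/n_{2,1}(p#). -/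
set_option maxHeartbeats 1000000

/-- `totalDT N g` is the total number of driving terms for the gap `g` of all lengths
in the cycle of gaps of `N`. -/
def totalDT (N g : ℕ) : ℕ :=
  ((Finset.Icc 1 N).filter (fun a => Nat.gcd a N = 1 ∧ Nat.gcd (a + g) N = 1)).card

/-- `nthPrime k` is the `k`-th prime, with `nthPrime 1 = 2`. -/
noncomputable def nthPrime (k : ℕ) : ℕ := Nat.nth Nat.Prime (k - 1)

open Finset Filter



def cnt (N : ℕ) (F : Finset ℕ) : ℕ :=
  ((Finset.Icc 1 N).filter (fun a => ∀ d ∈ F, Nat.gcd (a + d) N = 1)).card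

def resCard (q : ℕ) (F : Finset ℕ) : ℕ :=
  (F.image (fun d : ℕ => (d : ZMod q))).card

noncomputable def cntZ (N : ℕ) (F : Finset ℕ) : ℕ :=
  Nat.card {a : ZMod N // ∀ d ∈ F, IsUnit (a + (d : ZMod N))}

lemma prod_isUnit_iff {M N : Type*} [Monoid M] [Monoid N] (x : M × N) :
    IsUnit x ↔ IsUnit x.1 ∧ IsUnit x.2 := by
  constructor
  · intro h
    exact ⟨h.map (MonoidHom.fst M N), h.map (MonoidHom.snd M N)⟩
  · rintro ⟨⟨u, hu⟩, ⟨v, hv⟩⟩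
    exact ⟨MulEquiv.prodUnits.symm (u, v), by simp [MulEquiv.prodUnits, hu, hv]⟩

lemma cnt_eq_cntZ (N : ℕ) (hN : N ≠ 0) (F : Finset ℕ) : cnt N F = cntZ N F := by
  haveI : NeZero N := ⟨hN⟩
  classical
  rw [cntZ, Nat.card_eq_fintype_card, Fintype.card_subtype, cnt]
  apply Finset.card_bij' (fun a _ => ((a : ℕ) : ZMod N))
    (fun x _ => if (x : ZMod N).val = 0 then N else (x : ZMod N).val)
  · intro a ha
    simp only [mem_filter, mem_Icc, mem_univ, true_and] at ha ⊢
    intro d hd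
    rw [← Nat.cast_add, ZMod.isUnit_iff_coprime]
    exact ha.2 d hd
  · intro x hx
    simp only [mem_filter, mem_univ, true_and] at hx
    simp only [mem_filter, mem_Icc]
    have hvlt := ZMod.val_lt x
    by_cases h0 : x.val = 0
    · rw [if_pos h0]
      refine ⟨⟨by omega, le_refl _⟩, fun d hd => ?_⟩
      have hx0 : x = 0 := by rwa [ZMod.val_eq_zero] at h0
      have h2 : ((N + d : ℕ) : ZMod N) = x + (d : ZMod N) := by
        push_cast [ZMod.natCast_self, hx0]; ring
      exact (ZMod.isUnit_iff_coprime _ _).mp (by rw [h2]; exact hx d hd)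
    · rw [if_neg h0]
      refine ⟨⟨Nat.one_le_iff_ne_zero.mpr h0, hvlt.le⟩, fun d hd => ?_⟩
      have h2 : ((x.val + d : ℕ) : ZMod N) = x + (d : ZMod N) := by
        push_cast [ZMod.natCast_rightInverse x]; ring
      exact (ZMod.isUnit_iff_coprime _ _).mp (by rw [h2]; exact hx d hd)
  · intro a ha
    simp only [mem_filter, mem_Icc] at ha
    rcases eq_or_lt_of_le ha.1.2 with h | h
    · have h2 : ((a : ℕ) : ZMod N) = 0 := by rw [h]; exact ZMod.natCast_self N
      rw [h2]
      simp [ZMod.val_zero, h]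
    · have hv : ((a : ℕ) : ZMod N).val = a := ZMod.val_cast_of_lt h
      rw [hv, if_neg (by omega)]
  · intro x hx
    by_cases h0 : x.val = 0
    · rw [if_pos h0]
      have hx0 : x = 0 := by rwa [ZMod.val_eq_zero] at h0
      simp [hx0, ZMod.natCast_self]
    · rw [if_neg h0]
      exact ZMod.natCast_rightInverse x

lemma mulEquiv_isUnit_iff {M N : Type*} [Monoid M] [Monoid N] (e : M ≃* N) (x : M) :
    IsUnit (e x) ↔ IsUnit x :=
  ⟨fun h => by simpa using h.map e.symm, fun h => h.map e⟩

lemma cntZ_mul (m n : ℕ) (h : Nat.Coprime m n) (F : Finset ℕ) :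
    cntZ (m * n) F = cntZ m F * cntZ n F := by
  rw [cntZ, cntZ, cntZ, ← Nat.card_prod]
  apply Nat.card_congr
  have e := ZMod.chineseRemainder h
  have e1 : {a : ZMod (m*n) // ∀ d ∈ F, IsUnit (a + (d : ZMod (m*n)))} ≃
      {x : ZMod m × ZMod n // (∀ d ∈ F, IsUnit (x.1 + (d : ZMod m))) ∧
        (∀ d ∈ F, IsUnit (x.2 + (d : ZMod n)))} := by
    refine e.toEquiv.subtypeEquiv fun a => ?_
    have key : ∀ d : ℕ, IsUnit (a + (d : ZMod (m*n))) ↔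
        (IsUnit ((e a).1 + (d : ZMod m)) ∧ IsUnit ((e a).2 + (d : ZMod n))) := by
      intro d
      have h1 : e (a + (d : ZMod (m*n))) = ((e a).1 + (d : ZMod m), (e a).2 + (d : ZMod n)) := by
        rw [map_add, map_natCast]
        exact Prod.ext (by simp) (by simp)
      rw [← mulEquiv_isUnit_iff e.toMulEquiv (a + (d : ZMod (m*n)))]
      show IsUnit (e _) ↔ _
      rw [h1, prod_isUnit_iff]
    constructor
    · intro ha
      exact ⟨fun d hd => ((key d).mp (ha d hd)).1, fun d hd => ((key d).mp (ha d hd)).2⟩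
    · intro ha d hd
      exact (key d).mpr ⟨ha.1 d hd, ha.2 d hd⟩
  exact e1.trans (Equiv.subtypeProdEquivProd
    (p := fun y : ZMod m => ∀ d ∈ F, IsUnit (y + (d : ZMod m)))
    (q := fun y : ZMod n => ∀ d ∈ F, IsUnit (y + (d : ZMod n))))

lemma cntZ_prime (q : ℕ) (hq : q.Prime) (F : Finset ℕ) :
    cntZ q F = q - resCard q F := by
  haveI : Fact q.Prime := ⟨hq⟩
  classical
  rw [cntZ, Nat.card_eq_fintype_card, Fintype.card_subtype]
  have hset : (univ.filter fun a : ZMod q => ∀ d ∈ F, IsUnit (a + (d : ZMod q)))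
      = (F.image (fun d : ℕ => -(d : ZMod q)))ᶜ := by
    ext a
    simp only [mem_filter, mem_univ, true_and, mem_compl, mem_image, not_exists]
    constructor
    · intro ha d hd
      have h2 := ha d hd.1
      rw [← hd.2] at h2
      simp at h2
    · intro ha d hd
      rw [isUnit_iff_ne_zero]
      intro h0
      exact ha d ⟨hd, by linear_combination -h0⟩
  rw [hset, card_compl]
  congr 1
  · simp [ZMod.card]
  · rw [resCard]
    have : (F.image fun d : ℕ => -(d : ZMod q)) = (F.image fun d : ℕ => (d : ZMod q)).image Neg.neg := by
      rw [image_image]; rfl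
    rw [this, card_image_of_injective _ neg_injective]


lemma cnt_mul' (m n : ℕ) (hm : m ≠ 0) (hn : n ≠ 0) (h : Nat.Coprime m n) (F : Finset ℕ) :
    cnt (m * n) F = cnt m F * cnt n F := by
  rw [cnt_eq_cntZ _ (mul_ne_zero hm hn), cntZ_mul m n h, ← cnt_eq_cntZ _ hm, ← cnt_eq_cntZ _ hn]

lemma cnt_prime' (q : ℕ) (hq : q.Prime) (F : Finset ℕ) : cnt q F = q - resCard q F := by
  rw [cnt_eq_cntZ _ hq.ne_zero, cntZ_prime q hq]

lemma cnt_one (F : Finset ℕ) : cnt 1 F = 1 := by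
  rw [cnt]
  have : Finset.Icc 1 1 = {1} := rfl
  rw [this]
  simp [Nat.gcd_one_right]

lemma cnt_prod (S : Finset ℕ) (hS : ∀ q ∈ S, q.Prime) (F : Finset ℕ) :
    cnt (∏ q ∈ S, q) F = ∏ q ∈ S, (q - resCard q F) := by
  classical
  induction S using Finset.induction_on with
  | empty => simpa using cnt_one F
  | @insert q S hqS ih =>
    rw [Finset.prod_insert hqS, Finset.prod_insert hqS]
    have hq : q.Prime := hS q (Finset.mem_insert_self q S)
    have hS' : ∀ r ∈ S, r.Prime := fun r hr => hS r (Finset.mem_insert_of_mem hr)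
    have hcop : Nat.Coprime q (∏ r ∈ S, r) := by
      apply Nat.Coprime.prod_right
      intro r hr
      exact (Nat.coprime_primes hq (hS' r hr)).mpr (fun h => hqS (h ▸ hr))
    have hprodne : (∏ r ∈ S, r) ≠ 0 :=
      (Finset.prod_pos fun r hr => (hS' r hr).pos).ne'
    rw [cnt_mul' q _ hq.ne_zero hprodne hcop, cnt_prime' q hq, ih hS']

lemma cnt_primorial (n : ℕ) (F : Finset ℕ) :
    cnt (primorial n) F = ∏ q ∈ (Finset.range (n+1)).filter Nat.Prime, (q - resCard q F) := by
  rw [primorial]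
  exact cnt_prod _ (fun q hq => (Finset.mem_filter.mp hq).2) F


lemma totalDT_eq (N g : ℕ) (hg : g ≠ 0) : totalDT N g = cnt N {0, g} := by
  rw [totalDT, cnt]
  congr 1
  apply Finset.filter_congr
  intro a _
  simp [Nat.add_zero]

lemma nGaps2_eq (N : ℕ) (h2 : 2 ∣ N) : nGaps N 2 1 = cnt N {0, 2} := by
  rw [nGaps, cnt]
  congr 1
  apply Finset.filter_congr
  intro a _
  have hIoo : Finset.Ioo a (a + 2) = {a + 1} := by
    ext b
    simp only [Finset.mem_Ioo, Finset.mem_singleton]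
    omega
  simp only [hIoo, Nat.sub_self, Finset.card_eq_zero, Finset.mem_insert, Finset.mem_singleton,
    Finset.filter_eq_empty_iff, Finset.mem_singleton]
  constructor
  · rintro ⟨h1, h2', _⟩
    intro d hd
    rcases hd with rfl | rfl
    · simpa using h1
    · exact h2'
  · intro h
    have h1 : Nat.gcd a N = 1 := by simpa using h 0 (Or.inl rfl)
    refine ⟨h1, h 2 (Or.inr rfl), ?_⟩
    intro b hb
    subst hb
    intro hgcd
    have ha2 : ¬ (2 ∣ a) := by
      intro hdvd
      have hh := Nat.dvd_gcd hdvd h2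
      rw [h1] at hh
      omega
    have hh : (2:ℕ) ∣ Nat.gcd (a+1) N := Nat.dvd_gcd (by omega) h2
    rw [hgcd] at hh
    omega

lemma filter_Ioo_empty_iff (N a g : ℕ) :
    (Finset.Ioo a (a+g)).filter (fun b => Nat.gcd b N = 1) = ∅ ↔
    (Finset.Ioo 0 g).filter (fun d => Nat.gcd (a+d) N = 1) = ∅ := by
  constructor <;> intro h <;> rw [Finset.eq_empty_iff_forall_notMem] at h ⊢
  · intro d hd
    simp only [Finset.mem_filter, Finset.mem_Ioo] at hd
    exact h (a + d) (by
      simp only [Finset.mem_filter, Finset.mem_Ioo]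
      exact ⟨⟨by omega, by omega⟩, hd.2⟩)
  · intro b hb
    simp only [Finset.mem_filter, Finset.mem_Ioo] at hb
    refine h (b - a) ?_
    simp only [Finset.mem_filter, Finset.mem_Ioo]
    have : a + (b - a) = b := by omega
    rw [this]
    exact ⟨⟨by omega, by omega⟩, hb.2⟩

lemma nGaps_ie (N g : ℕ) : (nGaps N g 1 : ℝ) =
    ∑ D ∈ (Finset.Ioo 0 g).powerset,
      (-1 : ℝ) ^ D.card * (cnt N (insert 0 (insert g D)) : ℝ) := by
  classical
  set I := Finset.Ioo 0 g with hI
  set Sa : ℕ → Finset ℕ := fun a => I.filter (fun d => Nat.gcd (a + d) N = 1) with hSa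
  set B := (Finset.Icc 1 N).filter
    (fun a => Nat.gcd a N = 1 ∧ Nat.gcd (a + g) N = 1) with hB
  have hre : ∀ x : Finset ℕ, (∑ D ∈ x.powerset, (-1 : ℝ)^D.card) =
      if x = ∅ then 1 else 0 := by
    intro x
    have h := @Finset.sum_powerset_neg_one_pow_card ℕ _ x
    have h2 := congrArg (fun z : ℤ => (z : ℝ)) h
    push_cast at h2
    convert h2 using 2
  have h1 : nGaps N g 1 = (B.filter (fun a => Sa a = ∅)).card := by
    rw [nGaps, hB, Finset.filter_filter]
    congr 1
    apply Finset.filter_congr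
    intro a _
    show _ ↔ (Nat.gcd a N = 1 ∧ Nat.gcd (a + g) N = 1) ∧ Sa a = ∅
    rw [hSa]
    simp only [Nat.sub_self, Finset.card_eq_zero]
    constructor
    · rintro ⟨u1, u2, u3⟩
      exact ⟨⟨u1, u2⟩, (filter_Ioo_empty_iff N a g).mp u3⟩
    · rintro ⟨⟨u1, u2⟩, u3⟩
      exact ⟨u1, u2, (filter_Ioo_empty_iff N a g).mpr u3⟩
  rw [h1]
  rw [← Finset.sum_boole]
  have h2 : ∀ a ∈ B, (if Sa a = ∅ then (1:ℝ) else 0) =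
      ∑ D ∈ I.powerset, (if D ⊆ Sa a then (-1:ℝ)^D.card else 0) := by
    intro a _
    rw [← hre (Sa a)]
    have hsub : (Sa a).powerset ⊆ I.powerset :=
      Finset.powerset_mono.mpr (Finset.filter_subset _ _)
    rw [← Finset.sum_subset hsub (fun D _ hD2 =>
      if_neg (fun hs => hD2 (Finset.mem_powerset.mpr hs)))]
    apply Finset.sum_congr rfl
    intro D hD
    rw [if_pos (Finset.mem_powerset.mp hD)]
  rw [Finset.sum_congr rfl h2, Finset.sum_comm]
  apply Finset.sum_congr rfl
  intro D hD
  rw [Finset.mem_powerset] at hD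
  have h3 : ∀ a ∈ B, (if D ⊆ Sa a then (-1:ℝ)^D.card else 0) =
      (-1:ℝ)^D.card * (if D ⊆ Sa a then (1:ℝ) else 0) := by
    intro a _
    split <;> ring
  rw [Finset.sum_congr rfl h3, ← Finset.mul_sum, Finset.sum_boole]
  congr 1
  rw [hB, cnt, Finset.filter_filter]
  norm_cast
  congr 1
  apply Finset.filter_congr
  intro a _
  constructor
  · rintro ⟨⟨u1, u2⟩, u3⟩ d hd
    simp only [Finset.mem_insert, Finset.mem_singleton] at hd
    rcases hd with rfl | rfl | hd''
    · simpa using u1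
    · exact u2
    · exact (Finset.mem_filter.mp (u3 hd'')).2
  · intro h
    refine ⟨⟨by simpa using h 0 (Finset.mem_insert_self 0 _),
      h g (Finset.mem_insert_of_mem (Finset.mem_insert_self g D))⟩, ?_⟩
    intro d hd
    rw [hSa, Finset.mem_filter]
    exact ⟨hD hd, h d (Finset.mem_insert_of_mem (Finset.mem_insert_of_mem hd))⟩

lemma resCard_eq_card (q : ℕ) (F : Finset ℕ)
    (h : ∀ x ∈ F, ∀ y ∈ F, x ≡ y [MOD q] → x = y) : resCard q F = F.card :=
  Finset.card_image_of_injOn fun x hx y hy hxy =>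
    h x hx y hy ((ZMod.natCast_eq_natCast_iff _ _ _).mp hxy)

lemma resCard_le (q : ℕ) (F : Finset ℕ) : resCard q F ≤ F.card :=
  Finset.card_image_le

lemma resCard_of_even (q G : ℕ) (hq : Odd q) (hG : G < 2 * q) (F : Finset ℕ)
    (hF : ∀ x ∈ F, 2 ∣ x ∧ x ≤ G) : resCard q F = F.card := by
  apply resCard_eq_card
  have key : ∀ x ∈ F, ∀ y ∈ F, x ≤ y → x ≡ y [MOD q] → x = y := by
    intro x hx y hy hxy hmod
    obtain ⟨c, hc⟩ := (Nat.modEq_iff_dvd' hxy).mp hmod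
    have hq1 : 1 ≤ q := hq.pos
    have hyG := (hF y hy).2
    have h5 : q * c < q * 2 := by rw [← hc]; omega
    have hcle : c < 2 := Nat.lt_of_mul_lt_mul_left h5
    interval_cases c
    · omega
    · obtain ⟨x2, hx2⟩ := (hF x hx).1
      obtain ⟨y2, hy2⟩ := (hF y hy).1
      obtain ⟨m, hm⟩ := hq
      omega
  intro x hx y hy hmod
  rcases le_total x y with h | h
  · exact key x hx y hy h hmod
  · exact (key y hy x hx h hmod.symm).symm

lemma resCard_two_of_even (F : Finset ℕ) (hne : F.Nonempty) (hF : ∀ x ∈ F, 2 ∣ x) :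
    resCard 2 F = 1 := by
  rw [resCard, Finset.card_eq_one]
  obtain ⟨x0, hx0⟩ := hne
  refine ⟨0, ?_⟩
  ext z
  simp only [Finset.mem_image, Finset.mem_singleton]
  constructor
  · rintro ⟨d, hd, rfl⟩
    exact (ZMod.natCast_eq_zero_iff d 2).mpr (hF d hd)
  · rintro rfl
    exact ⟨x0, hx0, (ZMod.natCast_eq_zero_iff x0 2).mpr (hF x0 hx0)⟩

lemma resCard_two_of_odd_mem (F : Finset ℕ) (x y : ℕ) (hx : x ∈ F) (hy : y ∈ F)
    (hxe : 2 ∣ x) (hyo : ¬ 2 ∣ y) : resCard 2 F = 2 := by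
  have h1 : ({0, 1} : Finset (ZMod 2)) ⊆ F.image (fun d : ℕ => (d : ZMod 2)) := by
    intro z hz
    rcases Finset.mem_insert.mp hz with rfl | hz'
    · exact Finset.mem_image.mpr ⟨x, hx, (ZMod.natCast_eq_zero_iff x 2).mpr hxe⟩
    · rw [Finset.mem_singleton] at hz'
      subst hz'
      refine Finset.mem_image.mpr ⟨y, hy, ?_⟩
      have hne0 : ¬ ((y : ZMod 2) = 0) := fun h => hyo ((ZMod.natCast_eq_zero_iff y 2).mp h)
      have hall : ∀ z : ZMod 2, z ≠ 0 → z = 1 := by decide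
      exact hall _ hne0
  have h2 := Finset.card_le_card h1
  have h3 : (F.image (fun d : ℕ => (d : ZMod 2))).card ≤ 2 := by
    have := Finset.card_le_univ (F.image (fun d : ℕ => (d : ZMod 2)))
    simpa using this
  have h4 : ({0, 1} : Finset (ZMod 2)).card = 2 := by decide
  rw [resCard]
  omega

lemma nthPrime_prime (k : ℕ) : (nthPrime k).Prime := Nat.prime_nth_prime _

lemma le_nthPrime (k : ℕ) : k - 1 ≤ nthPrime k :=
  Nat.le_nth (fun hf => absurd hf Nat.infinite_setOf_prime)

lemma tendsto_nthPrime : Tendsto nthPrime atTop atTop :=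
  tendsto_atTop_mono le_nthPrime (tendsto_sub_atTop_nat 1)

lemma tendsto_prod_ratio (p : ℕ) (hp3 : 3 ≤ p) :
    Tendsto (fun k => ∏ q ∈ ((Finset.range (nthPrime k + 1)).filter Nat.Prime).filter
        (fun q => p < q), (((q : ℝ) - 3) / ((q : ℝ) - 2)))
      atTop (nhds 0) := by
  set ind : ℕ → ℝ := Set.indicator {n | Nat.Prime n} (fun n => 1 / (n : ℝ)) with hind
  have hind0 : ∀ n, 0 ≤ ind n := by
    intro n
    rw [hind]
    apply Set.indicator_nonneg
    intro n _
    positivity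
  have hpartial : Tendsto (fun n => ∑ i ∈ Finset.range n, ind i) atTop atTop :=
    (not_summable_iff_tendsto_nat_atTop_of_nonneg hind0).mp not_summable_one_div_on_primes
  have hcomp : Tendsto (fun k => ∑ i ∈ Finset.range (nthPrime k + 1), ind i) atTop atTop :=
    hpartial.comp ((tendsto_add_atTop_nat 1).comp tendsto_nthPrime)
  set Cp : ℝ := ∑ q ∈ (Finset.range (p + 1)).filter Nat.Prime, (1 / (q : ℝ)) with hCp
  set T : ℕ → ℝ := fun k => ∑ q ∈ ((Finset.range (nthPrime k + 1)).filter Nat.Prime).filter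
      (fun q => p < q), (1 / ((q : ℝ) - 2)) with hT
  have hmem : ∀ k q, q ∈ ((Finset.range (nthPrime k + 1)).filter Nat.Prime).filter
      (fun q => p < q) → 5 ≤ q := by
    intro k q hq
    simp only [Finset.mem_filter, Finset.mem_range] at hq
    have h2 := hq.1.2.two_le
    have h4 : q ≠ 4 := by
      intro h
      rw [h] at hq
      norm_num at hq
    omega
  have hTtop : Tendsto T atTop atTop := by
    apply tendsto_atTop_mono (f := fun k => (∑ i ∈ Finset.range (nthPrime k + 1), ind i) - Cp)
    · intro k
      have e1 : ∑ i ∈ Finset.range (nthPrime k + 1), ind i =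
          ∑ q ∈ (Finset.range (nthPrime k + 1)).filter Nat.Prime, (1 / (q : ℝ)) := by
        rw [Finset.sum_filter]
        apply Finset.sum_congr rfl
        intro n _
        rw [hind, Set.indicator_apply]
        simp [Set.mem_setOf_eq]
      set Pk := (Finset.range (nthPrime k + 1)).filter Nat.Prime with hPk
      have e2 : ∑ q ∈ Pk, (1 / (q : ℝ)) =
          ∑ q ∈ Pk.filter (fun q => p < q), (1 / (q : ℝ)) +
          ∑ q ∈ Pk.filter (fun q => ¬ p < q), (1 / (q : ℝ)) :=
        (Finset.sum_filter_add_sum_filter_not Pk _ _).symm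
      have e3 : ∑ q ∈ Pk.filter (fun q => ¬ p < q), (1 / (q : ℝ)) ≤ Cp := by
        rw [hCp]
        apply Finset.sum_le_sum_of_subset_of_nonneg
        · intro q hq
          simp only [Finset.mem_filter, Finset.mem_range, hPk] at hq ⊢
          exact ⟨by omega, hq.1.2⟩
        · intro q _ _
          positivity
      have e4 : ∑ q ∈ Pk.filter (fun q => p < q), (1 / (q : ℝ)) ≤ T k := by
        rw [hT]
        apply Finset.sum_le_sum
        intro q hq
        have h5 : 5 ≤ q := hmem k q hq
        have : (0:ℝ) < (q:ℝ) - 2 := by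
          have : (5:ℝ) ≤ (q:ℝ) := by exact_mod_cast h5
          linarith
        apply one_div_le_one_div_of_le this
        linarith
      rw [e1, e2]
      linarith
    · exact tendsto_atTop_add_const_right _ (-Cp) hcomp |>.congr (by intro x; ring_nf)
  apply squeeze_zero' (Eventually.of_forall ?lower) (Eventually.of_forall ?upper)
    ((Real.tendsto_exp_neg_atTop_nhds_zero).comp hTtop)
  case lower =>
    intro k
    apply Finset.prod_nonneg
    intro q hq
    have h5 := hmem k q hq
    have h5' : (5:ℝ) ≤ (q:ℝ) := by exact_mod_cast h5
    apply div_nonneg <;> linarith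
  case upper =>
    intro k
    show _ ≤ Real.exp (-(T k))
    set s := ((Finset.range (nthPrime k + 1)).filter Nat.Prime).filter (fun q => p < q) with hs
    have e0 : -(T k) = ∑ q ∈ s, -(1 / ((q : ℝ) - 2)) := by
      rw [hT]
      rw [← Finset.sum_neg_distrib]
    rw [e0, Real.exp_sum]
    apply Finset.prod_le_prod
    · intro q hq
      have h5' : (5:ℝ) ≤ (q:ℝ) := by exact_mod_cast hmem k q hq
      apply div_nonneg <;> linarith
    · intro q hq
      have h5' : (5:ℝ) ≤ (q:ℝ) := by exact_mod_cast hmem k q hq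
      have hpos : (0:ℝ) < (q:ℝ) - 2 := by linarith
      have heq : ((q:ℝ) - 3)/((q:ℝ) - 2) = 1 - 1/((q:ℝ) - 2) := by
        field_simp
        ring
      rw [heq]
      have := Real.add_one_le_exp (-(1/((q:ℝ) - 2)))
      linarith


lemma resCard_pair_two : resCard 2 ({0, 2} : Finset ℕ) = 1 := by
  apply resCard_two_of_even _ ⟨0, by simp⟩
  intro x hx
  rcases Finset.mem_insert.mp hx with rfl | hx'
  · exact ⟨0, rfl⟩
  · rw [Finset.mem_singleton] at hx'
    subst hx'
    exact ⟨1, rfl⟩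

lemma card_pair02 : ({0, 2} : Finset ℕ).card = 2 := rfl

lemma resCard_pair_odd (q : ℕ) (hq : Odd q) (hq3 : 3 ≤ q) :
    resCard q ({0, 2} : Finset ℕ) = 2 := by
  rw [resCard_of_even q 2 hq (by omega), card_pair02]
  intro x hx
  rcases Finset.mem_insert.mp hx with rfl | hx'
  · exact ⟨⟨0, rfl⟩, by omega⟩
  · rw [Finset.mem_singleton] at hx'
    subst hx'
    exact ⟨⟨1, rfl⟩, le_refl 2⟩

lemma den_factor_pos (q : ℕ) (hq : q.Prime) : 0 < q - resCard q ({0,2} : Finset ℕ) := by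
  rcases eq_or_ne q 2 with rfl | hne
  · rw [resCard_pair_two]
    omega
  · have hodd := hq.odd_of_ne_two hne
    have h3 : 3 ≤ q := by
      have := hq.two_le
      rcases hodd with ⟨m, hm⟩
      omega
    rw [resCard_pair_odd q hodd h3]
    omega

lemma split_primes (p n : ℕ) (hk : p ≤ n) :
    ((Finset.range (n+1)).filter Nat.Prime).filter (fun q => ¬ p < q) =
      (Finset.range (p+1)).filter Nat.Prime := by
  ext q
  simp only [Finset.mem_filter, Finset.mem_range, not_lt]
  constructor
  · rintro ⟨⟨h1, h2⟩, h3⟩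
    exact ⟨by omega, h2⟩
  · rintro ⟨h1, h2⟩
    exact ⟨⟨by omega, h2⟩, by omega⟩

lemma prod_split (p n : ℕ) (hk : p ≤ n) (f : ℕ → ℕ) :
    ∏ q ∈ (Finset.range (n+1)).filter Nat.Prime, f q =
      (∏ q ∈ (Finset.range (p+1)).filter Nat.Prime, f q) *
      ∏ q ∈ ((Finset.range (n+1)).filter Nat.Prime).filter (fun q => p < q), f q := by
  rw [← Finset.prod_filter_mul_prod_filter_not ((Finset.range (n+1)).filter Nat.Prime)
    (fun q => p < q) f, split_primes p n hk, mul_comm]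

theorem stmt_1 (p p' : ℕ) (hp : p.Prime) (hodd : Odd p)
    (hp' : p'.Prime) (hgt : p < p') (hmin : ∀ r : ℕ, r.Prime → p < r → p' ≤ r)
    (g : ℕ) (hg2 : 2 ≤ g) (hgeven : Even g) (hglt : g < 2 * p') :
    Filter.Tendsto (fun k : ℕ =>
        (nGaps (primorial (nthPrime k)) g 1 : ℝ) / (nGaps (primorial (nthPrime k)) 2 1 : ℝ))
      Filter.atTop
      (nhds ((totalDT (primorial p) g : ℝ) / (nGaps (primorial p) 2 1 : ℝ))) := by
  classical
  have hp3 : 3 ≤ p := by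
    rcases hodd with ⟨m, hm⟩
    have := hp.two_le
    omega
  have hg0 : g ≠ 0 := by omega
  set c : ℝ := (totalDT (primorial p) g : ℝ) / (nGaps (primorial p) 2 1 : ℝ) with hc
  set pow := (Finset.Ioo 0 g).powerset with hpow
  set Pk : ℕ → Finset ℕ := fun k => (Finset.range (nthPrime k + 1)).filter Nat.Prime with hPk
  set den : ℕ → ℕ := fun k => ∏ q ∈ Pk k, (q - resCard q ({0,2} : Finset ℕ)) with hden
  set num : ℕ → Finset ℕ → ℕ :=
    fun k D => ∏ q ∈ Pk k, (q - resCard q (insert 0 (insert g D))) with hnum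
  have hnth2 : ∀ k, 2 ≤ nthPrime k := fun k => (nthPrime_prime k).two_le
  have h2dvd : ∀ n, 2 ≤ n → 2 ∣ primorial n := by
    intro n hn
    rw [primorial]
    apply Finset.dvd_prod_of_mem
    simp only [Finset.mem_filter, Finset.mem_range]
    exact ⟨by omega, Nat.prime_two⟩
  have hqfacts : ∀ q : ℕ, q.Prime → p < q → Odd q ∧ 5 ≤ q ∧ g < 2*q := by
    intro q hq hpq
    have hq' : p' ≤ q := hmin q hq hpq
    have hq2 : q ≠ 2 := by omega
    have h4 : q ≠ 4 := by
      intro h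
      rw [h] at hq
      norm_num at hq
    have := hq.two_le
    exact ⟨hq.odd_of_ne_two hq2, by omega, by omega⟩
  -- resCard of the full shift sets for large primes
  have hFDcard : ∀ D ∈ pow, (insert 0 (insert g D)).card = D.card + 2 := by
    intro D hD
    rw [hpow, Finset.mem_powerset] at hD
    have hgD : g ∉ D := fun h => by
      have := hD h
      rw [Finset.mem_Ioo] at this
      omega
    have h0D : (0:ℕ) ∉ insert g D := by
      intro h
      rcases Finset.mem_insert.mp h with h' | h'
      · omega
      · have := hD h'
        rw [Finset.mem_Ioo] at this
        omega
    rw [Finset.card_insert_of_notMem h0D, Finset.card_insert_of_notMem hgD]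
  have hFDres : ∀ D ∈ pow, (∀ d ∈ D, 2 ∣ d) → ∀ q : ℕ, Odd q → g < 2*q →
      resCard q (insert 0 (insert g D)) = D.card + 2 := by
    intro D hD hDe q hqo hg2q
    rw [← hFDcard D hD]
    apply resCard_of_even q g hqo hg2q
    intro x hx
    rcases Finset.mem_insert.mp hx with rfl | hx'
    · exact ⟨⟨0, rfl⟩, by omega⟩
    · rcases Finset.mem_insert.mp hx' with rfl | hx''
      · exact ⟨hgeven.two_dvd, le_refl _⟩
      · rw [hpow, Finset.mem_powerset] at hD
        have := hD hx''
        rw [Finset.mem_Ioo] at this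
        exact ⟨hDe x hx'', by omega⟩
  have hdenpos : ∀ k, 0 < den k := by
    intro k
    apply Finset.prod_pos
    intro q hq
    rw [hPk, Finset.mem_filter] at hq
    exact den_factor_pos q hq.2
  -- Step 1 : identity
  have hiden : ∀ k, (nGaps (primorial (nthPrime k)) 2 1 : ℕ) = den k := by
    intro k
    rw [nGaps2_eq _ (h2dvd _ (hnth2 k)), cnt_primorial]
  have hid : ∀ k, (nGaps (primorial (nthPrime k)) g 1 : ℝ) /
      (nGaps (primorial (nthPrime k)) 2 1 : ℝ)
      = ∑ D ∈ pow, ((-1:ℝ)^D.card * (num k D : ℝ) / (den k : ℝ)) := by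
    intro k
    rw [hiden k, nGaps_ie, Finset.sum_div]
    apply Finset.sum_congr rfl
    intro D _
    rw [cnt_primorial]
  -- Step 2 : per-term limits
  have hev : ∀ᶠ k in atTop, p ≤ nthPrime k := tendsto_nthPrime.eventually_ge_atTop p
  have hB : (∏ q ∈ (Finset.range (p+1)).filter Nat.Prime,
      (q - resCard q ({0,2} : Finset ℕ))) = nGaps (primorial p) 2 1 := by
    rw [nGaps2_eq _ (h2dvd _ (by omega)), cnt_primorial]
  have hA : (∏ q ∈ (Finset.range (p+1)).filter Nat.Prime,
      (q - resCard q (insert 0 (insert g (∅ : Finset ℕ))))) = totalDT (primorial p) g := by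
    rw [totalDT_eq _ _ hg0, cnt_primorial]
    apply Finset.prod_congr rfl
    intro q _
    congr 1
  have hBpos : 0 < ∏ q ∈ (Finset.range (p+1)).filter Nat.Prime,
      (q - resCard q ({0,2} : Finset ℕ)) := by
    apply Finset.prod_pos
    intro q hq
    rw [Finset.mem_filter] at hq
    exact den_factor_pos q hq.2
  have hterm : ∀ D ∈ pow, Tendsto (fun k => (-1:ℝ)^D.card * (num k D : ℝ) / (den k : ℝ))
      atTop (nhds (if D = ∅ then c else 0)) := by
    intro D hD
    by_cases hDe : D = ∅
    · -- constant term
      subst hDe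
      rw [if_pos rfl]
      refine Tendsto.congr' ?_ tendsto_const_nhds
      filter_upwards [hev] with k hk
      have hsplitn := prod_split p (nthPrime k) hk
        (fun q => q - resCard q (insert 0 (insert g (∅ : Finset ℕ))))
      have hsplitd := prod_split p (nthPrime k) hk
        (fun q => q - resCard q ({0,2} : Finset ℕ))
      have hextra : ∀ q ∈ (Pk k).filter (fun q => p < q),
          q - resCard q (insert 0 (insert g (∅ : Finset ℕ))) =
          q - resCard q ({0,2} : Finset ℕ) := by
        intro q hq
        rw [Finset.mem_filter, hPk, Finset.mem_filter] at hq
        obtain ⟨⟨_, hqp⟩, hpq⟩ := hq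
        obtain ⟨hqo, hq5, hg2q⟩ := hqfacts q hqp hpq
        rw [hFDres ∅ (by simp [hpow]) (by simp) q hqo hg2q,
          resCard_pair_odd q hqo (by omega)]
        simp
      have hnum_eq : num k ∅ = (totalDT (primorial p) g) *
          ∏ q ∈ (Pk k).filter (fun q => p < q), (q - resCard q ({0,2} : Finset ℕ)) := by
        rw [hnum]
        show (∏ q ∈ Pk k, (q - resCard q (insert 0 (insert g (∅:Finset ℕ))))) = _
        rw [hPk] at *
        rw [hsplitn, hA]
        congr 1
        exact Finset.prod_congr rfl hextra
      have hden_eq : den k = (nGaps (primorial p) 2 1) *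
          ∏ q ∈ (Pk k).filter (fun q => p < q), (q - resCard q ({0,2} : Finset ℕ)) := by
        rw [hden]
        show (∏ q ∈ Pk k, (q - resCard q ({0,2} : Finset ℕ))) = _
        rw [hPk] at *
        rw [hsplitd, hB]
      have hEpos : (0:ℝ) < ∏ q ∈ (Pk k).filter (fun q => p < q),
          ((q - resCard q ({0,2} : Finset ℕ) : ℕ) : ℝ) := by
        apply Finset.prod_pos
        intro q hq
        rw [Finset.mem_filter, hPk, Finset.mem_filter] at hq
        exact_mod_cast den_factor_pos q hq.1.2
      show c = _
      rw [hnum_eq, hden_eq]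
      push_cast
      rw [Finset.card_empty, pow_zero, one_mul, mul_div_mul_right _ _ (ne_of_gt hEpos)]
    · rw [if_neg hDe]
      by_cases hDeven : ∀ d ∈ D, 2 ∣ d
      · -- squeeze to zero
        have hmain : Tendsto (fun k => (num k D : ℝ) / (den k : ℝ)) atTop (nhds 0) := by
          have hC : Tendsto (fun k =>
              ((∏ q ∈ (Finset.range (p+1)).filter Nat.Prime,
                (q - resCard q (insert 0 (insert g D))) : ℕ) : ℝ) /
              ((∏ q ∈ (Finset.range (p+1)).filter Nat.Prime,
                (q - resCard q ({0,2} : Finset ℕ)) : ℕ) : ℝ) *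
              ∏ q ∈ (Pk k).filter (fun q => p < q), (((q:ℝ) - 3) / ((q:ℝ) - 2)))
              atTop (nhds 0) := by
            have := (tendsto_prod_ratio p hp3).const_mul
              (((∏ q ∈ (Finset.range (p+1)).filter Nat.Prime,
                (q - resCard q (insert 0 (insert g D))) : ℕ) : ℝ) /
              ((∏ q ∈ (Finset.range (p+1)).filter Nat.Prime,
                (q - resCard q ({0,2} : Finset ℕ)) : ℕ) : ℝ))
            rw [mul_zero] at this
            exact this
          apply squeeze_zero' ?_ ?_ hC
          · filter_upwards with k
            apply div_nonneg (by positivity) (by positivity)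
          · filter_upwards [hev] with k hk
            have hDcard : 1 ≤ D.card := Finset.card_pos.mpr (Finset.nonempty_of_ne_empty hDe)
            have hsplitn := prod_split p (nthPrime k) hk
              (fun q => q - resCard q (insert 0 (insert g D)))
            have hsplitd := prod_split p (nthPrime k) hk
              (fun q => q - resCard q ({0,2} : Finset ℕ))
            have hfacts : ∀ q ∈ (Pk k).filter (fun q => p < q),
                Odd q ∧ 5 ≤ q ∧ g < 2*q := by
              intro q hq
              rw [Finset.mem_filter, hPk, Finset.mem_filter] at hq
              exact hqfacts q hq.1.2 hq.2
            have hnum_eq : (num k D : ℝ) =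
                ((∏ q ∈ (Finset.range (p+1)).filter Nat.Prime,
                  (q - resCard q (insert 0 (insert g D))) : ℕ) : ℝ) *
                ∏ q ∈ (Pk k).filter (fun q => p < q),
                  (((q - (D.card + 2) : ℕ) : ℝ)) := by
              rw [hnum]
              show ((∏ q ∈ Pk k, (q - resCard q (insert 0 (insert g D))) : ℕ) : ℝ) = _
              rw [hPk] at *
              rw [hsplitn]
              push_cast
              congr 1
              apply Finset.prod_congr rfl
              intro q hq
              obtain ⟨hqo, hq5, hg2q⟩ := hfacts q hq
              rw [hFDres D hD hDeven q hqo hg2q]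
            have hden_eq : (den k : ℝ) =
                ((∏ q ∈ (Finset.range (p+1)).filter Nat.Prime,
                  (q - resCard q ({0,2} : Finset ℕ)) : ℕ) : ℝ) *
                ∏ q ∈ (Pk k).filter (fun q => p < q), (((q - 2 : ℕ) : ℝ)) := by
              rw [hden]
              show ((∏ q ∈ Pk k, (q - resCard q ({0,2} : Finset ℕ)) : ℕ) : ℝ) = _
              rw [hPk] at *
              rw [hsplitd]
              push_cast
              congr 1
              apply Finset.prod_congr rfl
              intro q hq
              obtain ⟨hqo, hq5, _⟩ := hfacts q hq
              rw [resCard_pair_odd q hqo (by omega)]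
            rw [hnum_eq, hden_eq, mul_div_mul_comm]
            apply mul_le_mul_of_nonneg_left ?_ (by positivity)
            rw [← Finset.prod_div_distrib]
            apply Finset.prod_le_prod
            · intro q hq
              apply div_nonneg (by positivity) (by positivity)
            · intro q hq
              obtain ⟨hqo, hq5, _⟩ := hfacts q hq
              have hq5' : (5:ℝ) ≤ (q:ℝ) := by exact_mod_cast hq5
              have h3q : (3:ℕ) ≤ q := by omega
              have h2q : (2:ℕ) ≤ q := by omega
              have hnum_le : ((q - (D.card + 2) : ℕ) : ℝ) ≤ (q:ℝ) - 3 := by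
                have h1 : (q - (D.card + 2) : ℕ) ≤ q - 3 := by omega
                have h2 : ((q - 3 : ℕ) : ℝ) = (q:ℝ) - 3 := by
                  push_cast [h3q]
                  ring
                calc ((q - (D.card + 2) : ℕ) : ℝ) ≤ ((q - 3 : ℕ) : ℝ) := by exact_mod_cast h1
                  _ = (q:ℝ) - 3 := h2
              have hden_eq2 : ((q - 2 : ℕ) : ℝ) = (q:ℝ) - 2 := by
                push_cast [h2q]
                ring
              rw [hden_eq2]
              have hdpos : (0:ℝ) < (q:ℝ) - 2 := by linarith
              gcongr
        have := hmain.const_mul ((-1:ℝ)^D.card)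
        rw [mul_zero] at this
        apply this.congr
        intro k
        ring
      · -- some odd element: term identically zero
        push_neg at hDeven
        obtain ⟨d0, hd0D, hd0odd⟩ := hDeven
        have hnum0 : ∀ k, num k D = 0 := by
          intro k
          rw [hnum]
          apply Finset.prod_eq_zero (i := 2)
          · rw [hPk, Finset.mem_filter, Finset.mem_range]
            exact ⟨by have := hnth2 k; omega, Nat.prime_two⟩
          · rw [resCard_two_of_odd_mem (insert 0 (insert g D)) 0 d0
              (Finset.mem_insert_self 0 _)
              (Finset.mem_insert_of_mem (Finset.mem_insert_of_mem hd0D))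
              ⟨0, rfl⟩ hd0odd]
            rfl
        apply Tendsto.congr (f₁ := fun _ => (0:ℝ))
        · intro k
          rw [hnum0 k]
          push_cast
          rw [mul_zero, zero_div]
        · exact tendsto_const_nhds
  -- Step 3 : combine
  have hsum := tendsto_finset_sum pow hterm
  have hval : (∑ D ∈ pow, (if D = ∅ then c else 0)) = c := by
    rw [Finset.sum_ite_eq' pow ∅ (fun _ => c)]
    rw [if_pos (Finset.empty_mem_powerset _)]
  rw [hval] at hsum
  apply hsum.congr
  intro k
  exact (hid k).symm
end

section
/- Let q be a prime dividing the positive integer N. Then the cycle of gaps of qN consists of q concatenated copies of the cycle of gaps of N: the totatives of qN are exactly the integers γ + jN with γ a totative of N and 0 ≤ j ≤ q − 1, and consequently n_{g,j'}(qN) = q·n_{g,j'}(N) for every integer g ≥ 1 and every length j' ≥ 1. -/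
lemma gcd_mul_left_iff {a q N : ℕ} (hdvd : q ∣ N) :
    Nat.gcd a (q * N) = 1 ↔ Nat.gcd a N = 1 := by
  constructor
  · intro h
    exact Nat.Coprime.coprime_dvd_right (dvd_mul_left N q) h
  · intro h
    exact Nat.Coprime.mul_right (Nat.Coprime.coprime_dvd_right hdvd h) h

lemma gcd_iter {a N : ℕ} (k : ℕ) : Nat.gcd (a + k * N) N = Nat.gcd a N := by
  induction k with
  | zero => simp
  | succ k ih => rw [show a + (k+1)*N = (a + k*N) + N by ring]; simp [Nat.gcd_add_self_left, ih]

lemma ioo_count_shift (N a g : ℕ) :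
    ((Finset.Ioo (a + N) (a + g + N)).filter (fun b => Nat.gcd b N = 1)).card
      = ((Finset.Ioo a (a + g)).filter (fun b => Nat.gcd b N = 1)).card := by
  rw [← Finset.map_add_right_Ioo, Finset.filter_map, Finset.card_map]
  congr 1
  ext b
  rw [Finset.mem_filter, Finset.mem_filter]; simp [addRightEmbedding, Nat.gcd_add_self_left]

lemma iter_period {N : ℕ} {P : ℕ → Prop} (hP : ∀ a, P (a + N) ↔ P a) (k : ℕ) :
    ∀ a, P (a + k * N) ↔ P a := by
  induction k with
  | zero => simp
  | succ k ihk =>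
    intro a
    rw [show a + (k+1)*N = (a + k*N) + N by ring, hP, ihk]

lemma periodic_count (N : ℕ) (P : ℕ → Prop) [DecidablePred P]
    (hP : ∀ a, P (a + N) ↔ P a) (k : ℕ) :
    ((Finset.Icc 1 (k * N)).filter P).card = k * ((Finset.Icc 1 N).filter P).card := by
  induction k with
  | zero => simp
  | succ k ih =>
    have hsplit : Finset.Icc 1 ((k+1) * N) =
        Finset.Icc 1 (k * N) ∪ Finset.Icc (k * N + 1) ((k+1) * N) := by
      ext x
      simp only [Finset.mem_Icc, Finset.mem_union]
      have : k * N ≤ (k+1) * N := Nat.mul_le_mul_right N (by omega)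
      omega
    have hdisj : Disjoint (Finset.Icc 1 (k * N)) (Finset.Icc (k * N + 1) ((k+1) * N)) := by
      rw [Finset.disjoint_left]
      intro x hx hx'
      simp only [Finset.mem_Icc] at hx hx'
      omega
    have himg : Finset.Icc (k * N + 1) ((k+1) * N) =
        (Finset.Icc 1 N).map (addRightEmbedding (k * N)) := by
      rw [Finset.map_add_right_Icc]
      congr 1 <;> ring
    rw [hsplit, Finset.filter_union,
      Finset.card_union_of_disjoint (Finset.disjoint_filter_filter hdisj), ih,
      himg, Finset.filter_map, Finset.card_map]
    have : (Finset.Icc 1 N).filter (P ∘ (addRightEmbedding (k * N)))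
        = (Finset.Icc 1 N).filter P := by
      ext a
      rw [Finset.mem_filter, Finset.mem_filter]; simp [addRightEmbedding, iter_period hP k]
    rw [this]; ring

theorem stmt_2 (N q : ℕ) (hN : 0 < N) (hq : q.Prime) (hdvd : q ∣ N) :
    (∀ a : ℕ, (1 ≤ a ∧ a ≤ q * N ∧ Nat.gcd a (q * N) = 1) ↔
      (∃ γ j : ℕ, (1 ≤ γ ∧ γ ≤ N ∧ Nat.gcd γ N = 1) ∧ j ≤ q - 1 ∧ a = γ + j * N)) ∧
    (∀ g j' : ℕ, 1 ≤ g → 1 ≤ j' → nGaps (q * N) g j' = q * nGaps N g j') := by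
  constructor
  · intro a
    have hq2 := hq.two_le
    constructor
    · rintro ⟨h1, h2, h3⟩
      set m := (a - 1) / N with hm
      set r := (a - 1) % N with hr
      have hdm : N * m + r = a - 1 := by rw [hm, hr]; exact Nat.div_add_mod (a-1) N
      have hrlt : r < N := Nat.mod_lt _ hN
      have hkey : a = (r + 1) + m * N := by rw [Nat.mul_comm]; omega
      have hmq : m ≤ q - 1 := by
        by_contra hc
        push_neg at hc
        have : q ≤ m := by omega
        have : N * q ≤ N * m := Nat.mul_le_mul_left N this
        have : q * N = N * q := Nat.mul_comm q N
        omega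
      refine ⟨r + 1, m, ⟨by omega, by omega, ?_⟩, hmq, hkey⟩
      rw [gcd_mul_left_iff hdvd] at h3
      rw [← gcd_iter m, ← hkey]
      exact h3
    · rintro ⟨γ, j, ⟨hγ1, hγ2, hγ3⟩, hj, rfl⟩
      refine ⟨by omega, ?_, ?_⟩
      · have h1 : γ + j * N ≤ (j + 1) * N := by
          have : (j + 1) * N = N + j * N := by ring
          omega
        have h2 : (j + 1) * N ≤ q * N := Nat.mul_le_mul_right N (by omega)
        omega
      · rw [gcd_mul_left_iff hdvd, gcd_iter]; exact hγ3
  · intro g j' _ _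
    unfold nGaps
    set P : ℕ → Prop := fun a =>
      Nat.gcd a N = 1 ∧ Nat.gcd (a + g) N = 1 ∧
        ((Finset.Ioo a (a + g)).filter (fun b => Nat.gcd b N = 1)).card = j' - 1 with hPdef
    have hfilter_eq : ∀ a : ℕ,
        ((Finset.Ioo a (a + g)).filter (fun b => Nat.gcd b (q * N) = 1))
          = ((Finset.Ioo a (a + g)).filter (fun b => Nat.gcd b N = 1)) := by
      intro a
      apply Finset.filter_congr
      intro b _
      simp [gcd_mul_left_iff hdvd]
    have h1 : ((Finset.Icc 1 (q * N)).filter (fun a =>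
        Nat.gcd a (q * N) = 1 ∧ Nat.gcd (a + g) (q * N) = 1 ∧
          ((Finset.Ioo a (a + g)).filter (fun b => Nat.gcd b (q * N) = 1)).card = j' - 1))
        = ((Finset.Icc 1 (q * N)).filter P) := by
      apply Finset.filter_congr
      intro a _
      simp only [hPdef, gcd_mul_left_iff hdvd, hfilter_eq a]
    have hper : ∀ a, P (a + N) ↔ P a := by
      intro a
      simp only [hPdef]
      rw [Nat.gcd_add_self_left]
      constructor
      · rintro ⟨x, y, z⟩
        refine ⟨x, ?_, ?_⟩
        · rw [show a + N + g = (a + g) + N by ring, Nat.gcd_add_self_left] at y; exact y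
        · rw [show a + N + g = a + g + N by ring] at z
          rw [← ioo_count_shift N a g]; exact z
      · rintro ⟨x, y, z⟩
        refine ⟨x, ?_, ?_⟩
        · rw [show a + N + g = (a + g) + N by ring, Nat.gcd_add_self_left]; exact y
        · rw [show a + N + g = a + g + N by ring, ioo_count_shift N a g]; exact z
    rw [h1, periodic_count N P hper q]
end

section
/- For every integer n ≥ 1 there exists K such that for every k ≥ K the gap 2n occurs in the cycle of gaps of p_k#: there is an integer a coprime to p_k# such that a + 2n is coprime to p_k# and no integer b with a < b < a + 2n is coprime to p_k#. In particular, for every n ≥ 1 the gap 2n occurs in infinitely many stages of Eratosthenes sieve. -/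
/-- The gap `g` occurs in the cycle of gaps of `N`: there are two integers coprime to `N`
at distance `g` with no integer strictly between them coprime to `N`. -/
def gapOccurs (N g : ℕ) : Prop :=
  ∃ a : ℕ, Nat.gcd a N = 1 ∧ Nat.gcd (a + g) N = 1 ∧
    ∀ b : ℕ, a < b → b < a + g → Nat.gcd b N ≠ 1

local notation "P" => Nat.nth Nat.Prime

lemma P_prime (i : ℕ) : (P i).Prime := Nat.prime_nth_prime i

lemma P_lt_P {i j : ℕ} (h : i < j) : P i < P j :=
  (Nat.nth_lt_nth Nat.infinite_setOf_prime).2 h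

lemma P_le_P {i j : ℕ} (h : i ≤ j) : P i ≤ P j :=
  (Nat.nth_le_nth Nat.infinite_setOf_prime).2 h

lemma P_ge (i : ℕ) : i + 2 ≤ P i := by
  induction i with
  | zero => simp [Nat.nth_prime_zero_eq_two]
  | succ m ih =>
    have h := P_lt_P (Nat.lt_succ_self m)
    calc m + 1 + 2 ≤ P m + 1 := by omega
    _ ≤ P (m + 1) := h

/-- CRT: there is `a` with prescribed residues mod the first `k` primes. -/
lemma crt (r : ℕ → ℕ) (k : ℕ) : ∃ a : ℕ, ∀ i < k, a ≡ r i [MOD P i] := by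
  obtain ⟨a, ha⟩ := Nat.chineseRemainderOfFinset r P (Finset.range k)
    (fun i _ => (P_prime i).pos.ne')
    (by
      intro i hi j hj hij
      exact (Nat.coprime_primes (P_prime i) (P_prime j)).2
        (fun h => hij (Nat.nth_injective Nat.infinite_setOf_prime h)))
  exact ⟨a, fun i hi => ha i (Finset.mem_range.2 hi)⟩

lemma prime_dvd_primorial {p m : ℕ} (hp : p.Prime) : p ∣ primorial m ↔ p ≤ m := by
  unfold primorial
  rw [Prime.dvd_finset_prod_iff hp.prime]
  constructor
  · rintro ⟨q, hq, hdvd⟩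
    simp only [Finset.mem_filter, Finset.mem_range] at hq
    have : p = q := (Nat.prime_dvd_prime_iff_eq hp hq.2).1 hdvd
    omega
  · intro h
    exact ⟨p, by simp only [Finset.mem_filter, Finset.mem_range]; exact ⟨by omega, hp⟩, dvd_rfl⟩

theorem stmt_8 (n : ℕ) (hn : 1 ≤ n) :
    ∃ K : ℕ, ∀ k ≥ K, gapOccurs (primorial (nthPrime k)) (2 * n) := by
  refine ⟨3 * n, fun k hk => ?_⟩
  set N := primorial (nthPrime k) with hN
  set r : ℕ → ℕ := fun i =>
    if i = 0 then 1
    else if 2 * n ≤ i ∧ i < 3 * n - 1 then P i - 2 * (i - 2 * n + 1)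
    else if P i ∣ (2 * n + 1) then 2 else 1 with hr
  obtain ⟨a, ha⟩ := crt r k
  have hk1 : 1 ≤ k := by omega
  have hdvdN : ∀ p : ℕ, p.Prime → p ∣ N → ∃ i, i < k ∧ p = P i := by
    intro p hp hpN
    rw [hN, nthPrime, prime_dvd_primorial hp] at hpN
    refine ⟨Nat.count Nat.Prime p, ?_, (Nat.nth_count hp).symm⟩
    by_contra hcon
    push_neg at hcon
    have : P (k - 1) < P (Nat.count Nat.Prime p) := P_lt_P (by omega)
    rw [Nat.nth_count hp] at this
    omega
  have hPdvdN : ∀ i < k, P i ∣ N := by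
    intro i hi
    rw [hN, nthPrime, prime_dvd_primorial (P_prime i)]
    exact P_le_P (by omega)
  -- key: P i divides neither a nor a + 2n
  have hkey : ∀ i < k, ¬ P i ∣ a ∧ ¬ P i ∣ (a + 2 * n) := by
    intro i hi
    have hmod := ha i hi
    have hdvd_iff : ∀ c : ℕ, P i ∣ a + c ↔ P i ∣ r i + c := by
      intro c
      rw [← Nat.modEq_zero_iff_dvd, ← Nat.modEq_zero_iff_dvd]
      exact ⟨fun h => (hmod.add_right c).symm.trans h, fun h => (hmod.add_right c).trans h⟩
    have h0 : P i ∣ a ↔ P i ∣ r i := by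
      have := hdvd_iff 0; simpa using this
    rw [h0, hdvd_iff]
    by_cases hi0 : i = 0
    · subst hi0
      have hr0 : r 0 = 1 := by simp [hr]
      rw [hr0, Nat.nth_prime_zero_eq_two]
      omega
    · have hPi3 : 3 ≤ P i := by have := P_ge i; omega
      by_cases hiq : 2 * n ≤ i ∧ i < 3 * n - 1
      · have hri : r i = P i - 2 * (i - 2 * n + 1) := by
          rw [hr]; simp [hi0, hiq]
        set m := i - 2 * n + 1 with hm
        have hm1 : 1 ≤ m ∧ m ≤ n - 1 := by omega
        have hPib : 2 * n + m + 1 ≤ P i := by have := P_ge i; omega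
        constructor
        · rw [hri]
          exact Nat.not_dvd_of_pos_of_lt (by omega) (by omega)
        · intro hdvd
          rw [hri] at hdvd
          have heq : P i - 2 * m + 2 * n = P i + (2 * n - 2 * m) := by omega
          rw [heq] at hdvd
          have : P i ∣ (2 * n - 2 * m) := (Nat.dvd_add_right dvd_rfl).mp hdvd
          have := Nat.le_of_dvd (by omega) this
          omega
      · by_cases hd : P i ∣ (2 * n + 1)
        · have hri : r i = 2 := by rw [hr]; simp [hi0, hiq, hd]
          rw [hri]
          constructor
          · exact Nat.not_dvd_of_pos_of_lt (by omega : (0:ℕ) < 2) (by omega)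
          · intro hdvd
            have h1 := Nat.dvd_sub hdvd hd
            have he : 2 + 2 * n - (2 * n + 1) = 1 := by omega
            rw [he] at h1
            have := Nat.le_of_dvd one_pos h1
            omega
        · have hri : r i = 1 := by rw [hr]; simp [hi0, hiq, hd]
          rw [hri]
          exact ⟨Nat.not_dvd_of_pos_of_lt (by omega : (0:ℕ) < 1) (by omega),
            fun hdvd => hd (by rwa [Nat.add_comm] at hdvd)⟩
  -- coprimality of a and a + 2n with N
  have hcop : ∀ x : ℕ, (∀ i < k, ¬ P i ∣ x) → Nat.gcd x N = 1 := by
    intro x hx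
    by_contra hgcd
    obtain ⟨p, hp, hpx, hpN⟩ := Nat.Prime.not_coprime_iff_dvd.mp hgcd
    obtain ⟨i, hik, rfl⟩ := hdvdN p hp hpN
    exact hx i hik hpx
  refine ⟨a, hcop a (fun i hik => (hkey i hik).1),
    hcop (a + 2 * n) (fun i hik => (hkey i hik).2), ?_⟩
  -- middle elements
  intro b hab hba hgcd
  set j := b - a with hj
  have hbj : b = a + j := by omega
  have hj1 : 1 ≤ j ∧ j < 2 * n := by omega
  have hnot1 : ∀ p : ℕ, p.Prime → p ∣ b → p ∣ N → False := by
    intro p hp hpb hpN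
    have : p ∣ Nat.gcd b N := Nat.dvd_gcd hpb hpN
    rw [hgcd] at this
    exact hp.one_lt.ne' (Nat.eq_one_of_dvd_one this ▸ rfl)
  by_cases hpar : j % 2 = 1
  · -- odd offset: b is even
    have h2 : a % 2 = 1 := by
      have := ha 0 (by omega)
      rw [Nat.nth_prime_zero_eq_two] at this
      have hr0 : r 0 = 1 := by rw [hr]; simp
      rw [hr0] at this
      simpa [Nat.ModEq] using this
    have h2b : 2 ∣ b := by omega
    exact hnot1 2 Nat.prime_two h2b (by
      rw [← Nat.nth_prime_zero_eq_two]; exact hPdvdN 0 (by omega))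
  · -- even offset: j = 2m
    have ⟨m, hm⟩ : ∃ m, j = 2 * m := ⟨j / 2, by omega⟩
    have hmb : 1 ≤ m ∧ m ≤ n - 1 := by omega
    set i := 2 * n + m - 1 with hi
    have hik : i < k := by omega
    have hiq : 2 * n ≤ i ∧ i < 3 * n - 1 := by omega
    have hi0 : i ≠ 0 := by omega
    have hri : r i = P i - 2 * m := by
      rw [hr]; simp only [if_neg hi0, if_pos hiq]; congr 1; omega
    have hPib : 2 * n + m + 1 ≤ P i := by have := P_ge i; omega
    have hdvd : P i ∣ b := by
      have hmod := ha i hik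
      have : b ≡ r i + j [MOD P i] := by rw [hbj]; exact hmod.add_right j
      have hrij : r i + j = P i := by omega
      rw [hrij] at this
      have : b ≡ 0 [MOD P i] := this.trans ((Nat.modEq_zero_iff_dvd).2 dvd_rfl)
      exact (Nat.modEq_zero_iff_dvd).1 this
    exact hnot1 (P i) (P_prime i) hdvd (hPdvdN i hik)
end

section
/- For every integer k ≥ 2, the gap 2·p_{k−1} occurs in the cycle of gaps of p_k#: there is an integer a coprime to p_k# such that a + 2p_{k−1} is coprime to p_k# and no integer b with a < b < a + 2p_{k−1} is coprime to p_k#. -/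
open Nat Finset

lemma prime_nth' (n : ℕ) : (Nat.nth Nat.Prime n).Prime :=
  Nat.nth_mem_of_infinite Nat.infinite_setOf_prime n

lemma nth_prime_mono : StrictMono (Nat.nth Nat.Prime) :=
  Nat.nth_strictMono Nat.infinite_setOf_prime

lemma dvd_primorial' {r s : ℕ} (hr : r.Prime) (h : r ≤ s) : r ∣ primorial s :=
  Finset.dvd_prod_of_mem _ (by simp [Finset.mem_filter, Nat.lt_succ_iff, h, hr])

lemma le_of_dvd_primorial' {r s : ℕ} (hr : r.Prime) (h : r ∣ primorial s) : r ≤ s := by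
  unfold primorial at h
  obtain ⟨x, hx, hdvd⟩ := (hr.prime.dvd_finset_prod_iff _).1 h
  simp only [Finset.mem_filter, Finset.mem_range, Nat.lt_succ_iff] at hx
  exact ((Nat.prime_dvd_prime_iff_eq hr hx.2).1 hdvd) ▸ hx.1

lemma primorial_dvd_primorial' {s t : ℕ} (h : s ≤ t) : primorial s ∣ primorial t :=
  Finset.prod_dvd_prod_of_subset _ _ _
    (Finset.filter_subset_filter _ (Finset.range_subset_range.2 (by omega)))

lemma lt_nth_prime_succ {r j : ℕ} (hr : r.Prime) (h : r < Nat.nth Nat.Prime (j + 1)) :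
    r ≤ Nat.nth Nat.Prime j := by
  classical
  have h1 : Nat.nth Nat.Prime (Nat.count Nat.Prime r) = r := Nat.nth_count hr
  have h2 : Nat.count Nat.Prime r < j + 1 := by
    by_contra hc
    exact absurd (h1 ▸ nth_prime_mono.monotone (by omega : j + 1 ≤ Nat.count Nat.Prime r)) (by omega)
  exact h1 ▸ nth_prime_mono.monotone (by omega : Nat.count Nat.Prime r ≤ j)

theorem stmt_14 (k : ℕ) (hk : 2 ≤ k) :
    gapOccurs (primorial (nthPrime k)) (2 * nthPrime (k - 1)) := by
  rcases Nat.lt_or_ge k 3 with hk2 | hk3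
  · -- k = 2 : N = 6, gap 4, a = 1
    have hk' : k = 2 := by omega
    subst hk'
    have h1 : nthPrime 2 = 3 := by simp [nthPrime]
    have h2 : nthPrime 1 = 2 := by simp [nthPrime]
    rw [h1, h2]
    refine ⟨1, by decide, by decide, ?_⟩
    intro b hb1 hb2
    interval_cases b <;> decide
  · obtain ⟨m, rfl⟩ : ∃ m, k = m + 3 := ⟨k - 3, by omega⟩
    set P := Nat.nth Nat.Prime (m + 2) with hPdef
    set Q := Nat.nth Nat.Prime (m + 1) with hQdef
    set M := primorial (Nat.nth Nat.Prime m) with hMdef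
    have hgoal1 : nthPrime (m + 3) = P := by simp [nthPrime, hPdef]
    have hgoal2 : nthPrime (m + 3 - 1) = Q := by simp [nthPrime, hQdef]
    rw [hgoal1, hgoal2]
    set N := primorial P with hNdef
    have hPp : P.Prime := prime_nth' _
    have hQp : Q.Prime := prime_nth' _
    have hQP : Q < P := nth_prime_mono (by omega)
    have hQ3 : 3 ≤ Q := by
      have := nth_prime_mono.monotone (show 1 ≤ m + 1 by omega)
      simpa [hQdef] using this
    have hnmQ : Nat.nth Nat.Prime m < Q := nth_prime_mono (by omega)
    have hMQ : Nat.Coprime M Q := by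
      rw [Nat.coprime_comm, Nat.Prime.coprime_iff_not_dvd hQp]
      intro hdvd
      have := le_of_dvd_primorial' hQp hdvd
      omega
    have hMQP : Nat.Coprime (M * Q) P := by
      rw [Nat.coprime_comm, Nat.Prime.coprime_iff_not_dvd hPp]
      intro hdvd
      rcases (Nat.Prime.dvd_mul hPp).1 hdvd with h | h
      · have h1 := le_of_dvd_primorial' hPp h
        have h2 : Nat.nth Nat.Prime m < P := nth_prime_mono (by omega)
        omega
      · exact absurd ((Nat.prime_dvd_prime_iff_eq hPp hQp).1 h) (by omega)
    obtain ⟨c₁, hc₁M, hc₁Q⟩ := Nat.chineseRemainder hMQ 0 1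
    obtain ⟨c, hcMQ, hcP⟩ := Nat.chineseRemainder hMQP c₁ (P - 1)
    -- congruences of c, in ℤ
    have hcM : (M : ℤ) ∣ (c : ℤ) := by
      have h1 : c ≡ c₁ [MOD M] := hcMQ.of_dvd ⟨Q, rfl⟩
      have h2 : c ≡ 0 [MOD M] := h1.trans hc₁M
      exact Int.natCast_dvd_natCast.2 (Nat.modEq_zero_iff_dvd.1 h2)
    have hcQ : (Q : ℤ) ∣ (c : ℤ) - 1 := by
      have h1 : c ≡ c₁ [MOD Q] := hcMQ.of_dvd ⟨M, Nat.mul_comm _ _⟩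
      have h2 := (h1.trans hc₁Q).dvd
      -- h2 : (Q:ℤ) ∣ 1 - c
      have h3 := dvd_neg.mpr h2
      rwa [neg_sub] at h3
    have hcP1 : (P : ℤ) ∣ (c : ℤ) + 1 := by
      have h2 : (P : ℤ) ∣ ((P - 1 : ℕ) : ℤ) - (c : ℤ) := hcP.dvd
      have hPpos : 1 ≤ P := hPp.one_lt.le
      have h3 : ((P - 1 : ℕ) : ℤ) - (c : ℤ) = (P : ℤ) - ((c : ℤ) + 1) := by omega
      rw [h3] at h2
      have h4 := _root_.dvd_sub (dvd_refl (P : ℤ)) h2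
      rwa [sub_sub_cancel] at h4
    -- divisibilities of N
    have hMN : M ∣ N := primorial_dvd_primorial' (nth_prime_mono.monotone (by omega : m ≤ m + 2))
    have hQN : Q ∣ N := dvd_primorial' hQp hQP.le
    have hPN : P ∣ N := dvd_primorial' hPp le_rfl
    have h2M : 2 ∣ M := dvd_primorial' Nat.prime_two (by
      have := nth_prime_mono.monotone (show 0 ≤ m by omega)
      simpa using this)
    have hNpos : 0 < N := primorial_pos _
    have hQleN : Q ≤ N := Nat.le_of_dvd hNpos hQN
    have hPNZ : (P : ℤ) ∣ (N : ℤ) := Int.natCast_dvd_natCast.2 hPN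
    have hQNZ : (Q : ℤ) ∣ (N : ℤ) := Int.natCast_dvd_natCast.2 hQN
    -- Q + 1 < P since Q is odd
    have hQodd : Odd Q := hQp.odd_of_ne_two (by omega)
    have hQ1P : Q + 1 < P := by
      rcases Nat.lt_or_ge (Q + 1) P with h' | h'
      · exact h'
      · exfalso
        have hQ1 : Q + 1 = P := by omega
        have heven : Even (Q + 1) := by
          rcases hQodd with ⟨j, hj⟩; exact ⟨j + 1, by omega⟩
        have := (Nat.Prime.even_iff (hQ1 ▸ hPp)).1 heven
        omega
    refine ⟨c + N - Q, ?_, ?_, ?_⟩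
    · -- gcd a N = 1
      by_contra h
      obtain ⟨r, hrp, hra, hrN⟩ := Nat.Prime.not_coprime_iff_dvd.mp h
      have hrP : r ≤ P := le_of_dvd_primorial' hrp hrN
      have hraZ : (r : ℤ) ∣ (c : ℤ) + (N : ℤ) - (Q : ℤ) := by
        have hcast : ((c + N - Q : ℕ) : ℤ) = (c : ℤ) + (N : ℤ) - (Q : ℤ) := by omega
        rw [← hcast]; exact_mod_cast hra
      rcases eq_or_lt_of_le hrP with hrP' | hrP'
      · -- r = P
        rw [hrP'] at hraZ
        have h5 := _root_.dvd_sub (dvd_add hcP1 hPNZ) hraZ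
        rw [show (c : ℤ) + 1 + (N : ℤ) - ((c : ℤ) + (N : ℤ) - (Q : ℤ)) = (Q : ℤ) + 1 by ring] at h5
        have hdq : P ∣ Q + 1 := by exact_mod_cast h5
        exact absurd (Nat.le_of_dvd (by omega) hdq) (by omega)
      · have hrQ : r ≤ Q := lt_nth_prime_succ hrp hrP'
        rcases eq_or_lt_of_le hrQ with hrQ' | hrQ'
        · -- r = Q
          rw [hrQ'] at hraZ
          have h5 := _root_.dvd_sub (dvd_add hcQ hQNZ) hraZ
          rw [show (c : ℤ) - 1 + (N : ℤ) - ((c : ℤ) + (N : ℤ) - (Q : ℤ)) = (Q : ℤ) - 1 by ring] at h5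
          have h6 := _root_.dvd_sub (dvd_refl (Q : ℤ)) h5
          rw [sub_sub_cancel] at h6
          have : Q ∣ 1 := by exact_mod_cast h6
          exact absurd (Nat.eq_one_of_dvd_one this) hQp.one_lt.ne'
        · have hrm : r ≤ Nat.nth Nat.Prime m := lt_nth_prime_succ hrp hrQ'
          have hrM : r ∣ M := dvd_primorial' hrp hrm
          have hrC : (r : ℤ) ∣ (c : ℤ) := dvd_trans (Int.natCast_dvd_natCast.2 hrM) hcM
          have hrNZ : (r : ℤ) ∣ (N : ℤ) := Int.natCast_dvd_natCast.2 (hrM.trans hMN)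
          have h5 := _root_.dvd_sub (dvd_add hrC hrNZ) hraZ
          rw [show (c : ℤ) + (N : ℤ) - ((c : ℤ) + (N : ℤ) - (Q : ℤ)) = (Q : ℤ) by ring] at h5
          have hrq : r ∣ Q := by exact_mod_cast h5
          have := (Nat.prime_dvd_prime_iff_eq hrp hQp).1 hrq
          omega
    · -- gcd (a + 2Q) N = 1
      by_contra h
      obtain ⟨r, hrp, hra, hrN⟩ := Nat.Prime.not_coprime_iff_dvd.mp h
      have hrP : r ≤ P := le_of_dvd_primorial' hrp hrN
      have hraZ : (r : ℤ) ∣ (c : ℤ) + (N : ℤ) + (Q : ℤ) := by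
        have hcast : ((c + N - Q + 2 * Q : ℕ) : ℤ) = (c : ℤ) + (N : ℤ) + (Q : ℤ) := by omega
        rw [← hcast]; exact_mod_cast hra
      rcases eq_or_lt_of_le hrP with hrP' | hrP'
      · rw [hrP'] at hraZ
        have h5 := _root_.dvd_sub hraZ (dvd_add hcP1 hPNZ)
        rw [show (c : ℤ) + (N : ℤ) + (Q : ℤ) - ((c : ℤ) + 1 + (N : ℤ)) = (Q : ℤ) - 1 by ring] at h5
        have h6 : ((Q - 1 : ℕ) : ℤ) = (Q : ℤ) - 1 := by omega
        rw [← h6] at h5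
        have hdq : P ∣ Q - 1 := by exact_mod_cast h5
        have := Nat.le_of_dvd (by omega) hdq
        omega
      · have hrQ : r ≤ Q := lt_nth_prime_succ hrp hrP'
        rcases eq_or_lt_of_le hrQ with hrQ' | hrQ'
        · rw [hrQ'] at hraZ
          have h5 := _root_.dvd_sub hraZ (dvd_add (dvd_add hcQ hQNZ) (dvd_refl (Q : ℤ)))
          rw [show (c : ℤ) + (N : ℤ) + (Q : ℤ) - ((c : ℤ) - 1 + (N : ℤ) + (Q : ℤ)) = 1 by ring] at h5
          have : Q ∣ 1 := by exact_mod_cast h5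
          exact absurd (Nat.eq_one_of_dvd_one this) hQp.one_lt.ne'
        · have hrm : r ≤ Nat.nth Nat.Prime m := lt_nth_prime_succ hrp hrQ'
          have hrM : r ∣ M := dvd_primorial' hrp hrm
          have hrC : (r : ℤ) ∣ (c : ℤ) := dvd_trans (Int.natCast_dvd_natCast.2 hrM) hcM
          have hrNZ : (r : ℤ) ∣ (N : ℤ) := Int.natCast_dvd_natCast.2 (hrM.trans hMN)
          have h5 := _root_.dvd_sub hraZ (dvd_add hrC hrNZ)
          rw [show (c : ℤ) + (N : ℤ) + (Q : ℤ) - ((c : ℤ) + (N : ℤ)) = (Q : ℤ) by ring] at h5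
          have hrq : r ∣ Q := by exact_mod_cast h5
          have := (Nat.prime_dvd_prime_iff_eq hrp hQp).1 hrq
          omega
    · -- interior
      intro b hb1 hb2 hgcd
      have key : ∃ r : ℕ, r.Prime ∧ r ∣ b ∧ r ∣ N := by
        set t : ℤ := (b : ℤ) - ((c : ℤ) + (N : ℤ)) with htdef
        have htlb : -(Q : ℤ) < t := by omega
        have htub : t < (Q : ℤ) := by omega
        have hbt : (b : ℤ) = (c : ℤ) + (N : ℤ) + t := by omega
        rcases eq_or_ne t 1 with ht | ht1
        · refine ⟨P, hPp, ?_, hPN⟩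
          have h5 : (P : ℤ) ∣ (b : ℤ) := by
            rw [hbt, ht, show (c : ℤ) + (N : ℤ) + 1 = ((c : ℤ) + 1) + (N : ℤ) by ring]
            exact dvd_add hcP1 hPNZ
          exact_mod_cast h5
        rcases eq_or_ne t (-1) with ht | htm1
        · refine ⟨Q, hQp, ?_, hQN⟩
          have h5 : (Q : ℤ) ∣ (b : ℤ) := by
            rw [hbt, ht, show (c : ℤ) + (N : ℤ) + (-1) = ((c : ℤ) - 1) + (N : ℤ) by ring]
            exact dvd_add hcQ hQNZ
          exact_mod_cast h5
        rcases eq_or_ne t 0 with ht | ht0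
        · refine ⟨2, Nat.prime_two, ?_, h2M.trans hMN⟩
          have h2C : (2 : ℤ) ∣ (c : ℤ) := dvd_trans (Int.natCast_dvd_natCast.2 h2M) hcM
          have h2N : (2 : ℤ) ∣ (N : ℤ) := Int.natCast_dvd_natCast.2 (h2M.trans hMN)
          have h5 : (2 : ℤ) ∣ (b : ℤ) := by
            rw [hbt, ht, add_zero]; exact dvd_add h2C h2N
          exact_mod_cast h5
        · set u := t.natAbs with hudef
          have hu2 : 2 ≤ u := by
            rcases Int.natAbs_eq t with h | h <;> omega
          have huQ : u < Q := by
            rcases Int.natAbs_eq t with h | h <;> omega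
          set f := u.minFac with hfdef
          have hfp : f.Prime := Nat.minFac_prime (by omega)
          have hfu : f ∣ u := Nat.minFac_dvd u
          have hfQ : f < Q := lt_of_le_of_lt (Nat.le_of_dvd (by omega) hfu) huQ
          have hfm : f ≤ Nat.nth Nat.Prime m := lt_nth_prime_succ hfp hfQ
          have hfM : f ∣ M := dvd_primorial' hfp hfm
          refine ⟨f, hfp, ?_, hfM.trans hMN⟩
          have hfC : (f : ℤ) ∣ (c : ℤ) := dvd_trans (Int.natCast_dvd_natCast.2 hfM) hcM
          have hfN : (f : ℤ) ∣ (N : ℤ) := Int.natCast_dvd_natCast.2 (hfM.trans hMN)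
          have hft : (f : ℤ) ∣ t := by
            have h6 : (f : ℤ) ∣ (u : ℤ) := Int.natCast_dvd_natCast.2 hfu
            rcases Int.natAbs_eq t with h | h
            · rw [h]; exact h6
            · rw [h]; exact h6.neg_right
          have h5 : (f : ℤ) ∣ (b : ℤ) := by
            rw [hbt]; exact dvd_add (dvd_add hfC hfN) hft
          exact_mod_cast h5
      obtain ⟨r, hrp, hrb, hrN⟩ := key
      have : r ∣ 1 := hgcd ▸ Nat.dvd_gcd hrb hrN
      exact absurd (Nat.eq_one_of_dvd_one this) hrp.one_lt.ne'
end

section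
/- Superlinear growth in Eratosthenes sieve: for every integer n > 2 there exists K such that for every k ≥ K there are n + 1 consecutive integers coprime to p_k#, a_0 < a_1 < ⋯ < a_n (each a_i coprime to p_k# and no integer strictly between a_i and a_{i+1} coprime to p_k#), whose n successive gaps are strictly increasing: a_1 − a_0 < a_2 − a_1 < ⋯ < a_n − a_{n−1}. -/
open Finset

/-- CRT for a finset of distinct primes. -/
lemma crt_primes (S : Finset ℕ) (hS : ∀ q ∈ S, Nat.Prime q) (f : ℕ → ℕ) :
    ∃ x, ∀ q ∈ S, x % q = f q % q := by
  classical
  induction S using Finset.induction_on with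
  | empty => exact ⟨0, by simp⟩
  | @insert q S hq ih =>
    obtain ⟨x, hx⟩ := ih (fun r hr => hS r (Finset.mem_insert_of_mem hr))
    have hqp : Nat.Prime q := hS q (Finset.mem_insert_self q S)
    have hcop : Nat.Coprime q (∏ r ∈ S, r) := by
      apply Nat.Coprime.prod_right
      intro r hr
      exact (Nat.coprime_primes hqp (hS r (Finset.mem_insert_of_mem hr))).mpr
        (by rintro rfl; exact hq hr)
    obtain ⟨y, hy1, hy2⟩ := Nat.chineseRemainder hcop (f q) x
    refine ⟨y, ?_⟩
    intro r hr
    rcases Finset.mem_insert.mp hr with rfl | hr'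
    · exact hy1
    · have h1 : y % r = x % r := hy2.of_dvd (Finset.dvd_prod_of_mem _ hr')
      rw [h1]; exact hx r hr'

/-- For a prime `q > m+1` there is a residue `r` avoiding `-g i` for all `i ≤ m`. -/
lemma avoid_residue (q : ℕ) (hq : Nat.Prime q) (m : ℕ) (hm : m + 1 < q) (g : ℕ → ℕ) :
    ∃ r, ∀ i ≤ m, ¬ q ∣ (r + g i) := by
  haveI : Fact (Nat.Prime q) := ⟨hq⟩
  classical
  set T : Finset (ZMod q) := (Finset.range (m+1)).image (fun i => -(g i : ZMod q)) with hT
  have hcard : T.card < Fintype.card (ZMod q) := by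
    calc T.card ≤ (Finset.range (m+1)).card := Finset.card_image_le
    _ = m + 1 := by simp
    _ < q := hm
    _ = Fintype.card (ZMod q) := (ZMod.card q).symm
  have hne : ∃ z : ZMod q, z ∉ T := by
    by_contra h
    push_neg at h
    have : T = Finset.univ := Finset.eq_univ_iff_forall.mpr h
    rw [this] at hcard
    simp at hcard
  obtain ⟨z, hz⟩ := hne
  refine ⟨z.val, fun i hi hdvd => ?_⟩
  have h0 : ((z.val + g i : ℕ) : ZMod q) = 0 :=
    (ZMod.natCast_eq_zero_iff _ _).mpr hdvd
  push_cast at h0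
  rw [ZMod.natCast_val, ZMod.cast_id] at h0
  apply hz
  rw [hT]
  refine Finset.mem_image.mpr ⟨i, Finset.mem_range.mpr (Nat.lt_succ_of_le hi), ?_⟩
  linear_combination -h0

lemma prime_dvd_primorial_s15 {q m : ℕ} (hq : Nat.Prime q) (h : q ≤ m) : q ∣ primorial m :=
  Finset.dvd_prod_of_mem _ (by simp [Finset.mem_filter, Nat.lt_succ_iff, h, hq])

lemma le_of_prime_dvd_primorial {q m : ℕ} (hq : Nat.Prime q) (h : q ∣ primorial m) : q ≤ m := by
  rw [primorial] at h
  obtain ⟨r, hr, hqr⟩ := (hq.prime.dvd_finset_prod_iff _).mp h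
  simp only [Finset.mem_filter, Finset.mem_range, Nat.lt_succ_iff] at hr
  have heq : q = r := (Nat.prime_dvd_prime_iff_eq hq hr.2).mp hqr
  have hr1 := hr.1
  omega

lemma coprime_primorial_of {a m : ℕ} (h : ∀ q, Nat.Prime q → q ≤ m → ¬ q ∣ a) :
    Nat.Coprime a (primorial m) := by
  rw [primorial]
  apply Nat.Coprime.prod_right
  intro q hq
  simp only [Finset.mem_filter, Finset.mem_range, Nat.lt_succ_iff] at hq
  exact ((hq.2.coprime_iff_not_dvd).mpr (h q hq.2 hq.1)).symm

/-- `sfun Q i = Q * (0 + 1 + ⋯ + i)`. -/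
def sfun (Q i : ℕ) : ℕ := ∑ j ∈ Finset.range (i+1), Q * j

lemma sfun_succ (Q i : ℕ) : sfun Q (i+1) = sfun Q i + Q * (i+1) := by
  simp [sfun, Finset.sum_range_succ]

lemma sfun_strictMono {Q : ℕ} (hQ : 0 < Q) : StrictMono (sfun Q) := by
  apply strictMono_nat_of_lt_succ
  intro i
  rw [sfun_succ]
  have : 0 < Q * (i+1) := Nat.mul_pos hQ (Nat.succ_pos i)
  omega

lemma dvd_sfun {q Q : ℕ} (h : q ∣ Q) (i : ℕ) : q ∣ sfun Q i :=
  Finset.dvd_sum fun j _ => (h.mul_right j)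

/-- The predicate on "uncovered" offsets needing an assigned large prime. -/
def Tp (Q L : ℕ) (s : ℕ → ℕ) (t : ℕ) : Prop :=
  0 < t ∧ t < L ∧ Nat.Coprime (t+1) Q ∧ ∀ j, t ≠ s j

open Classical in
/-- The residue we demand modulo each prime `q`. -/
noncomputable def resid (n Q L : ℕ) (s : ℕ → ℕ) (q : ℕ) : ℕ :=
  if q ≤ n + 1 then 1
  else if h : ∃ t, Tp Q L s t ∧ q = Nat.nth Nat.Prime (L + t) then q - h.choose
  else if h2 : Nat.Prime q ∧ n + 1 < q then (avoid_residue q h2.1 n h2.2 s).choose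
  else 0

lemma resid_small {n Q L : ℕ} {s : ℕ → ℕ} {q : ℕ} (h : q ≤ n + 1) :
    resid n Q L s q = 1 := by
  rw [resid, if_pos h]

lemma resid_assigned {n Q L : ℕ} {s : ℕ → ℕ} {q : ℕ} (hq : ¬ q ≤ n + 1)
    (h : ∃ t, Tp Q L s t ∧ q = Nat.nth Nat.Prime (L + t)) :
    ∃ t, Tp Q L s t ∧ q = Nat.nth Nat.Prime (L + t) ∧ resid n Q L s q = q - t := by
  rw [resid, if_neg hq, dif_pos h]
  exact ⟨h.choose, h.choose_spec.1, h.choose_spec.2, rfl⟩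

lemma resid_other {n Q L : ℕ} {s : ℕ → ℕ} {q : ℕ} (hq : ¬ q ≤ n + 1)
    (hno : ¬ ∃ t, Tp Q L s t ∧ q = Nat.nth Nat.Prime (L + t))
    (h2 : Nat.Prime q ∧ n + 1 < q) :
    ∀ i ≤ n, ¬ q ∣ (resid n Q L s q + s i) := by
  rw [resid, if_neg hq, dif_neg hno, dif_pos h2]
  exact (avoid_residue q h2.1 n h2.2 s).choose_spec

theorem stmt_15 (n : ℕ) (hn : 2 < n) :
    ∃ K : ℕ, ∀ k ≥ K, ∃ a : ℕ → ℕ,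
      (∀ i ≤ n, Nat.gcd (a i) (primorial (nthPrime k)) = 1) ∧
      (∀ i < n, a i < a (i + 1) ∧
        ∀ b : ℕ, a i < b → b < a (i + 1) → Nat.gcd b (primorial (nthPrime k)) ≠ 1) ∧
      (∀ i : ℕ, i + 1 < n → a (i + 1) - a i < a (i + 2) - a (i + 1)) := by
  classical
  set Q : ℕ := primorial (n+1) with hQdef
  have hQpos : 0 < Q := primorial_pos _
  have h2Q : 2 ∣ Q := prime_dvd_primorial_s15 Nat.prime_two (by omega)
  have hQ2 : 2 ≤ Q := Nat.le_of_dvd hQpos h2Q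
  set s : ℕ → ℕ := sfun Q with hsdef
  set L : ℕ := s n with hLdef
  have hsmono : StrictMono s := sfun_strictMono hQpos
  have hLn : 2 * n ≤ L := by
    have h1 : Q * n ≤ s n := by
      have h2 : sfun Q ((n-1)+1) = sfun Q (n-1) + Q * ((n-1)+1) := sfun_succ Q (n-1)
      have hn' : n - 1 + 1 = n := by omega
      rw [hn'] at h2
      show Q * n ≤ sfun Q n
      rw [h2]
      omega
    have : 2 * n ≤ Q * n := Nat.mul_le_mul_right n hQ2
    omega
  have hLbig : n + 2 ≤ L := by omega
  refine ⟨2 * L + 2, fun k hk => ?_⟩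
  set p : ℕ := nthPrime k with hpdef
  have hppr : Nat.Prime p := Nat.prime_nth_prime _
  have hpbig : 2 * L + 3 ≤ p := by
    have h1 : (k - 1) + 2 ≤ p := Nat.add_two_le_nth_prime _
    omega
  -- the assigned primes
  have hA_prime : ∀ t, Nat.Prime (Nat.nth Nat.Prime (L + t)) := fun t => Nat.prime_nth_prime _
  have hA_gt : ∀ t, L + t + 2 ≤ Nat.nth Nat.Prime (L + t) := fun t => Nat.add_two_le_nth_prime _
  have hA_le : ∀ t < L, Nat.nth Nat.Prime (L + t) ≤ p := by
    intro t ht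
    have : L + t ≤ k - 1 := by omega
    exact Nat.nth_monotone Nat.infinite_setOf_prime this
  set f : ℕ → ℕ := resid n Q L s with hfdef
  set S : Finset ℕ := (Finset.range (p+1)).filter Nat.Prime with hSdef
  obtain ⟨x, hx⟩ := crt_primes S (fun q hq => (Finset.mem_filter.mp hq).2) f
  have hxmod : ∀ q, Nat.Prime q → q ≤ p → x % q = f q % q := by
    intro q hq hqp
    exact hx q (Finset.mem_filter.mpr ⟨Finset.mem_range.mpr (by omega), hq⟩)
  -- key divisibility transfer
  have htrans : ∀ q, Nat.Prime q → q ≤ p → ∀ c : ℕ, (q ∣ x + c ↔ q ∣ f q + c) := by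
    intro q hq hqp c
    have h1 : x + c ≡ f q + c [MOD q] := Nat.ModEq.add_right c (hxmod q hq hqp)
    constructor
    · intro hd
      exact Nat.modEq_zero_iff_dvd.mp (h1.symm.trans (Nat.modEq_zero_iff_dvd.mpr hd))
    · intro hd
      exact Nat.modEq_zero_iff_dvd.mp (h1.trans (Nat.modEq_zero_iff_dvd.mpr hd))
  -- no prime q ≤ p divides x + s i for i ≤ n
  have hcop : ∀ i ≤ n, ∀ q, Nat.Prime q → q ≤ p → ¬ q ∣ (x + s i) := by
    intro i hi q hq hqp hdvd
    have hdvd' : q ∣ f q + s i := (htrans q hq hqp _).mp hdvd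
    by_cases hsm : q ≤ n + 1
    · rw [hfdef, resid_small hsm] at hdvd'
      have hqQ : q ∣ Q := prime_dvd_primorial_s15 hq hsm
      have hqs : q ∣ s i := dvd_sfun hqQ i
      have : q ∣ 1 := (Nat.dvd_add_right hqs).mp (by rwa [Nat.add_comm] at hdvd')
      exact Nat.Prime.one_lt hq |>.ne' (Nat.dvd_one.mp this)
    · by_cases hex : ∃ t, Tp Q L s t ∧ q = Nat.nth Nat.Prime (L + t)
      · obtain ⟨t, htp, hqt, hres⟩ := resid_assigned hsm hex
        rw [hfdef] at hdvd'
        rw [hres] at hdvd'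
        have hqL : L + t + 2 ≤ q := hqt ▸ hA_gt t
        have htq : t < q := by omega
        have hsiL : s i ≤ L := by
          rcases Nat.eq_or_lt_of_le hi with rfl | hlt
          · exact le_refl _
          · exact le_of_lt (hsmono hlt)
        have hsiq : s i < q := by omega
        -- q ∣ (q - t) + s i with 0 < (q - t) + s i < 2 q forces s i = t
        obtain ⟨c, hc⟩ := hdvd'
        have hcval : s i = t := by
          rcases Nat.lt_or_ge c 2 with h | h
          · interval_cases c <;> omega
          · have := Nat.mul_le_mul_left q h
            omega
        exact htp.2.2.2 i hcval.symm
      · have h2 : Nat.Prime q ∧ n + 1 < q := ⟨hq, by omega⟩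
        exact resid_other hsm hex h2 i hi (by rwa [hfdef] at hdvd')
  set a : ℕ → ℕ := fun i => x + s i with hadef
  refine ⟨a, ?_, ?_, ?_⟩
  · -- coprimality
    intro i hi
    exact coprime_primorial_of (fun q hq hqp => hcop i hi q hq hqp)
  · -- consecutive
    intro i hi
    constructor
    · exact Nat.add_lt_add_left (hsmono (Nat.lt_succ_self i)) x
    · intro b hb1 hb2 hgcd
      have hai : a i = x + s i := rfl
      have hai1 : a (i+1) = x + s (i+1) := rfl
      set t : ℕ := b - x with htdef
      have hbx : b = x + t := by
        have : x ≤ b := le_trans (Nat.le_add_right x (s i)) (le_of_lt hb1)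
        omega
      have hst1 : s i < t := by omega
      have hst2 : t < s (i+1) := by omega
      have htpos : 0 < t := by
        have : 0 ≤ s i := Nat.zero_le _
        omega
      have htL : t < L := by
        have : s (i+1) ≤ s n := hsmono.monotone (by omega)
        omega
      -- find a prime dividing b and primorial p
      have hfind : ∃ q, Nat.Prime q ∧ q ≤ p ∧ q ∣ b := by
        by_cases hc : Nat.Coprime (t+1) Q
        · -- t is in Tp; use the assigned prime
          have htp : Tp Q L s t := by
            refine ⟨htpos, htL, hc, fun j hj => ?_⟩
            have hij : i < j := by
              have := hst1; rw [hj] at this; exact hsmono.lt_iff_lt.mp this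
            have hji : j < i + 1 := by
              have := hst2; rw [hj] at this; exact hsmono.lt_iff_lt.mp this
            omega
          set q : ℕ := Nat.nth Nat.Prime (L + t) with hqdef
          have hq : Nat.Prime q := hA_prime t
          have hqle : q ≤ p := hA_le t htL
          have hqgt : ¬ q ≤ n + 1 := by
            have := hA_gt t; omega
          obtain ⟨t0, ht0, hqt0, hres⟩ := resid_assigned (s := s) hqgt ⟨t, htp, rfl⟩
          have ht0t : t0 = t := by
            have := Nat.nth_injective Nat.infinite_setOf_prime (hqdef.trans hqt0).symm
            omega
          subst ht0t
          refine ⟨q, hq, hqle, ?_⟩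
          rw [hbx, htrans q hq hqle t, hfdef, hres]
          have hqL : L + t + 2 ≤ q := hA_gt t
          exact ⟨1, by omega⟩
        · -- a small prime divides t+1
          have hgne : Nat.gcd (t+1) Q ≠ 1 := hc
          obtain ⟨q, hq, hqd⟩ := Nat.exists_prime_and_dvd hgne
          have hq1 : q ∣ t + 1 := hqd.trans (Nat.gcd_dvd_left _ _)
          have hq2 : q ∣ Q := hqd.trans (Nat.gcd_dvd_right _ _)
          have hqsm : q ≤ n + 1 := le_of_prime_dvd_primorial hq hq2
          have hqle : q ≤ p := by omega
          refine ⟨q, hq, hqle, ?_⟩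
          rw [hbx, htrans q hq hqle t, hfdef, resid_small hqsm]
          rwa [Nat.add_comm] at hq1
      obtain ⟨q, hq, hqle, hqb⟩ := hfind
      have hqP : q ∣ primorial p := prime_dvd_primorial_s15 hq hqle
      have : q ∣ 1 := hgcd ▸ Nat.dvd_gcd hqb hqP
      exact Nat.Prime.one_lt hq |>.ne' (Nat.dvd_one.mp this)
  · -- strictly increasing gaps
    intro i hi
    have h1 : a (i+1) - a i = Q * (i+1) := by
      simp only [hadef]
      rw [hsdef, sfun_succ]
      omega
    have h2 : a (i+2) - a (i+1) = Q * (i+2) := by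
      simp only [hadef]
      rw [hsdef]
      have : sfun Q (i+2) = sfun Q (i+1) + Q * (i+2) := sfun_succ Q (i+1)
      omega
    rw [h1, h2]
    exact (Nat.mul_lt_mul_left hQpos).mpr (by omega)
end

section
/- Superlinear decay in Eratosthenes sieve: for every integer n > 2 there exists K such that for every k ≥ K there are n + 1 consecutive integers coprime to p_k#, a_0 < a_1 < ⋯ < a_n (each a_i coprime to p_k# and no integer strictly between a_i and a_{i+1} coprime to p_k#), whose n successive gaps are strictly decreasing: a_1 − a_0 > a_2 − a_1 > ⋯ > a_n − a_{n−1}. -/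
/-- Chinese remainder theorem over a finite set of (distinct) primes. -/
lemma crt_aux (S : Finset ℕ) (r : ℕ → ℕ) (hS : ∀ p ∈ S, Nat.Prime p) :
    ∃ x : ℕ, ∀ p ∈ S, x ≡ r p [MOD p] := by
  classical
  revert hS
  refine Finset.induction_on S (fun _ => ⟨0, by simp⟩) ?_
  rintro a s ha ih hS
  obtain ⟨x₀, hx₀⟩ := ih (fun p hp => hS p (Finset.mem_insert_of_mem hp))
  have haP : Nat.Coprime a (∏ p ∈ s, p) :=
    Nat.Coprime.prod_right fun p hp =>
      (Nat.coprime_primes (hS a (Finset.mem_insert_self a s))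
        (hS p (Finset.mem_insert_of_mem hp))).mpr (by rintro rfl; exact ha hp)
  obtain ⟨y, hy1, hy2⟩ := Nat.chineseRemainder haP (r a) x₀
  refine ⟨y, fun p hp => ?_⟩
  rcases Finset.mem_insert.mp hp with rfl | hp
  · exact hy1
  · exact (Nat.ModEq.of_dvd (Finset.dvd_prod_of_mem _ hp) hy2).trans (hx₀ p hp)

theorem stmt_16 (n : ℕ) (hn : 2 < n) :
    ∃ K : ℕ, ∀ k ≥ K, ∃ a : ℕ → ℕ,
      (∀ i ≤ n, Nat.gcd (a i) (primorial (nthPrime k)) = 1) ∧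
      (∀ i < n, a i < a (i + 1) ∧
        ∀ b : ℕ, a i < b → b < a (i + 1) → Nat.gcd b (primorial (nthPrime k)) ≠ 1) ∧
      (∀ i : ℕ, i + 1 < n → a (i + 1) - a i > a (i + 2) - a (i + 1)) := by
  classical
  -- M is divisible by every prime ≤ n+1
  set M := Nat.factorial (n + 1) with hMdef
  have hM : 0 < M := Nat.factorial_pos _
  -- offsets s i, with decreasing increments M*(n+1-i)
  set s : ℕ → ℕ := fun i => ∑ j ∈ Finset.range i, M * (n + 1 - j) with hsdef
  have hstep : ∀ i, s (i + 1) = s i + M * (n + 1 - i) := fun i =>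
    Finset.sum_range_succ _ i
  have hmono : Monotone s := monotone_nat_of_le_succ fun i => by
    rw [hstep i]; exact Nat.le_add_right _ _
  set L := s n with hLdef
  have hsL : ∀ i ≤ n, s i ≤ L := fun i hi => hmono hi
  have hMs : ∀ i, M ∣ s i := fun i => Finset.dvd_sum fun j _ => Dvd.intro _ rfl
  -- the auxiliary primes q t, all > L, injective
  set q : ℕ → ℕ := fun t => Nat.nth Nat.Prime (L + 1 + t) with hqdef
  have hsm : StrictMono (Nat.nth Nat.Prime) := Nat.nth_strictMono Nat.infinite_setOf_prime
  have hq_prime : ∀ t, Nat.Prime (q t) := fun t => Nat.prime_nth_prime _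
  have hq_gt : ∀ t, L < q t := fun t => by
    have := Nat.add_two_le_nth_prime (L + 1 + t)
    simp only [hqdef]; omega
  have hq_inj : Function.Injective q := fun a b h => by
    have := hsm.injective h; omega
  refine ⟨2 * L + 3, fun k hk => ?_⟩
  -- all q t for t ≤ L are ≤ nthPrime k
  have hq_le : ∀ t ≤ L, q t ≤ nthPrime k := fun t ht => by
    have : L + 1 + t ≤ k - 1 := by omega
    exact hsm.monotone this
  set S : Finset ℕ := (Finset.range (nthPrime k + 1)).filter Nat.Prime with hSdef
  have hSprime : ∀ p ∈ S, Nat.Prime p := fun p hp => (Finset.mem_filter.mp hp).2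
  have hprim : primorial (nthPrime k) = ∏ p ∈ S, p := rfl
  -- choose residues for each prime in S
  have hres : ∀ p : ℕ, ∃ r : ℕ, p ∈ S →
      (∀ i ≤ n, ¬ p ∣ r + s i) ∧
      (∀ t ≤ L, (∀ j ≤ n, t ≠ s j) → q t = p → p ∣ r + t) := by
    intro p
    by_cases hpS : p ∈ S
    swap
    · exact ⟨0, fun h => absurd h hpS⟩
    have hp : Nat.Prime p := hSprime p hpS
    by_cases hqp : ∃ t, t ≤ L ∧ (∀ j ≤ n, t ≠ s j) ∧ q t = p
    · obtain ⟨t₀, ht₀L, ht₀S, ht₀q⟩ := hqp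
      have hpL : L < p := ht₀q ▸ hq_gt t₀
      have hmod : t₀ % p < p := Nat.mod_lt _ hp.pos
      have hdd := Nat.mod_add_div t₀ p
      have hdvd0 : p ∣ (p - t₀ % p) + t₀ :=
        ⟨1 + t₀ / p, by rw [Nat.mul_add, Nat.mul_one]; omega⟩
      refine ⟨p - t₀ % p, fun _ => ⟨fun i hi hcon => ?_, fun t htL htS hqt => ?_⟩⟩
      · have hne : s i ≠ t₀ := fun h => ht₀S i hi h.symm
        have hd1 : p ∣ s i - t₀ := by
          have := Nat.dvd_sub hcon hdvd0
          have e1 : (p - t₀ % p + s i) - (p - t₀ % p + t₀) = s i - t₀ := by omega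
          rwa [e1] at this
        have hd2 : p ∣ t₀ - s i := by
          have := Nat.dvd_sub hdvd0 hcon
          have e1 : (p - t₀ % p + t₀) - (p - t₀ % p + s i) = t₀ - s i := by omega
          rwa [e1] at this
        have hsiL := hsL i hi
        rcases Nat.lt_or_ge (s i) t₀ with h | h
        · have := Nat.le_of_dvd (by omega) hd2; omega
        · have hlt : t₀ < s i := lt_of_le_of_ne h (Ne.symm hne)
          have := Nat.le_of_dvd (by omega) hd1; omega
      · have : t = t₀ := hq_inj (hqt.trans ht₀q.symm)
        subst this; exact hdvd0
    · push_neg at hqp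
      have hsecond : ∀ t ≤ L, (∀ j ≤ n, t ≠ s j) → q t = p → p ∣ p + t := by
        intro t htL htS hqt; exact absurd hqt (hqp t htL htS)
      by_cases hpn : p ≤ n + 1
      · refine ⟨1, fun _ => ⟨fun i hi hcon => ?_, fun t htL htS hqt =>
          absurd hqt (hqp t htL htS)⟩⟩
        have hpM : p ∣ M := Nat.dvd_factorial hp.pos hpn
        have hps : p ∣ s i := hpM.trans (hMs i)
        have : p ∣ 1 := by
          have := Nat.dvd_sub hcon hps
          have e1 : (1 + s i) - s i = 1 := by omega
          rwa [e1] at this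
        exact absurd (Nat.le_of_dvd one_pos this) (by have := hp.two_le; omega)
      · haveI : Fact p.Prime := ⟨hp⟩
        set T : Finset (ZMod p) :=
          (Finset.range (n + 1)).image (fun i => -((s i : ℕ) : ZMod p)) with hTdef
        have hT : T.card ≤ n + 1 :=
          le_trans Finset.card_image_le (by simp)
        have hcompl : Tᶜ.Nonempty := by
          rw [← Finset.card_pos, Finset.card_compl, ZMod.card]
          omega
        obtain ⟨x, hx⟩ := hcompl
        have hx' : x ∉ T := Finset.mem_compl.mp hx
        refine ⟨x.val, fun _ => ⟨fun i hi hcon => ?_, fun t htL htS hqt =>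
          absurd hqt (hqp t htL htS)⟩⟩
        apply hx'
        rw [hTdef, Finset.mem_image]
        refine ⟨i, Finset.mem_range.mpr (by omega), ?_⟩
        have h0 : ((x.val + s i : ℕ) : ZMod p) = 0 :=
          (ZMod.natCast_eq_zero_iff _ _).mpr hcon
        push_cast at h0
        rw [ZMod.natCast_zmod_val] at h0
        linear_combination -h0
  choose r hr using hres
  obtain ⟨x, hx⟩ := crt_aux S r hSprime
  -- transfer divisibility through the congruence
  have htrans : ∀ p ∈ S, ∀ c : ℕ, (p ∣ x + c ↔ p ∣ r p + c) := by
    intro p hp c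
    have hmx : (x + c) ≡ (r p + c) [MOD p] := (hx p hp).add_right _
    constructor
    · intro h
      exact (Nat.modEq_zero_iff_dvd).mp (hmx.symm.trans (Nat.modEq_zero_iff_dvd.mpr h))
    · intro h
      exact (Nat.modEq_zero_iff_dvd).mp (hmx.trans (Nat.modEq_zero_iff_dvd.mpr h))
  refine ⟨fun i => x + s i, ?_, ?_, ?_⟩
  · -- coprimality of the a i
    intro i hi
    show Nat.Coprime (x + s i) (primorial (nthPrime k))
    rw [hprim]
    refine Nat.Coprime.prod_right fun p hp => ?_
    have hnd : ¬ p ∣ x + s i := fun h =>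
      (hr p hp).1 i hi ((htrans p hp (s i)).mp h)
    exact (Nat.Prime.coprime_iff_not_dvd (hSprime p hp)).mpr hnd |>.symm
  · -- consecutiveness
    intro i hi
    have hpos : 0 < M * (n + 1 - i) := Nat.mul_pos hM (by omega)
    have hst := hstep i
    constructor
    · simp only; omega
    · intro b hb1 hb2
      simp only at hb1 hb2
      set t := b - x with htdef
      have hbx : b = x + t := by omega
      have hti : s i < t ∧ t < s (i + 1) := by omega
      have htL : t ≤ L := le_trans (le_of_lt hti.2) (hsL (i + 1) (by omega))
      have htS : ∀ j ≤ n, t ≠ s j := by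
        intro j hj heq
        rcases le_or_gt j i with h | h
        · have := hmono h; omega
        · have : i + 1 ≤ j := h
          have := hmono this; omega
      have hqS : q t ∈ S := by
        rw [hSdef, Finset.mem_filter, Finset.mem_range]
        exact ⟨by have := hq_le t htL; omega, hq_prime t⟩
      have hpb : q t ∣ b := by
        rw [hbx]
        exact (htrans (q t) hqS t).mpr ((hr (q t) hqS).2 t htL htS rfl)
      have hpP : q t ∣ primorial (nthPrime k) := by
        rw [hprim]; exact Finset.dvd_prod_of_mem _ hqS
      intro hg
      have := Nat.dvd_gcd hpb hpP
      rw [hg] at this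
      have := Nat.le_of_dvd one_pos this
      have := (hq_prime t).two_le
      omega
  · -- strictly decreasing gaps
    intro i hi
    have e1 := hstep i
    have e2 : s (i + 2) = s (i + 1) + M * (n - i) := by
      have := hstep (i + 1)
      have h3 : n + 1 - (i + 1) = n - i := by omega
      rwa [h3] at this
    have hAB : M * (n - i) < M * (n + 1 - i) :=
      mul_lt_mul_of_pos_left (by omega) hM
    simp only
    omega
end
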